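/- arXiv:2008.07213 — 2 statements merged into one kernel-verified Lean document; each statement's English description precedes it below -/
import Mathlib

section
/- Let W = G(e,r,n) = A(e,r,n) ⋊ S_n act on T̆ = (Z_ℓ/ℓ^∞)^n, where e | (ℓ−1). For t = (λ_1,…,λ_n) ∈ T̆, declare i ~ j iff λ_i = ζ λ_j for some e-th root of unity ζ ∈ Z_ℓ; let u_0 be the number of indices with λ_i = 0, and u_1,…,u_s the sizes of the remaining equivalence classes. Then the centralizer C_W(t) is isomorphic to G(e,r,u_0) × S_{u_1} × ⋯ × S_{u_s}, and in particular C_W(t) is generated by the reflections it contains. -/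
/-- The action of `S_n` on the base group `Fin n → A` of a wreath product. -/
def wreathAct (n : ℕ) (A : Type) [Group A] :
    Equiv.Perm (Fin n) →* MulAut (Fin n → A) where
  toFun σ :=
    { toFun := fun f => f ∘ σ.symm
      invFun := fun f => f ∘ σ
      left_inv := fun f => by ext i; simp
      right_inv := fun f => by ext i; simp
      map_mul' := fun f g => rfl }
  map_one' := by ext f i; rfl
  map_mul' := fun σ τ => by ext f i; rfl

/-- The wreath product `A ≀ S_n`. -/
abbrev Wreath (A : Type) [Group A] (n : ℕ) : Type :=
  (Fin n → A) ⋊[wreathAct n A] Equiv.Perm (Fin n)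

/-- The imprimitive reflection group `G(e,r,n)`, realised as the group of monomial
`n × n` matrices (encoded as pairs of a diagonal part and a permutation) whose
nonzero entries are `e`-th roots of unity with product an `(e/r)`-th root of unity. -/
def Gerr (A : Type) [CommGroup A] (e r n : ℕ) : Subgroup (Wreath A n) where
  carrier := {x | (∀ i, x.left i ^ e = 1) ∧ (∏ i, x.left i) ^ (e / r) = 1}
  one_mem' := by
    constructor
    · intro i; simp [SemidirectProduct.one_left]
    · simp [SemidirectProduct.one_left]
  mul_mem' := by
    rintro x y ⟨hx1, hx2⟩ ⟨hy1, hy2⟩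
    have hl : (x * y).left = fun i => x.left i * y.left (x.right.symm i) := rfl
    constructor
    · intro i
      rw [hl]
      simp only [mul_pow, hx1 i, hy1 _, mul_one]
    · rw [hl]
      rw [Finset.prod_mul_distrib]
      have : (∏ i, y.left (x.right.symm i)) = ∏ i, y.left i :=
        Equiv.prod_comp x.right.symm y.left
      rw [this, mul_pow, hx2, hy2, mul_one]
  inv_mem' := by
    rintro x ⟨hx1, hx2⟩
    constructor
    · intro i
      have h : (x⁻¹).left i = (x.left (x.right i))⁻¹ := rfl
      rw [h, inv_pow, hx1, inv_one]
    · have hb : (∏ i, (x⁻¹).left i) = ∏ i, (x.left (x.right i))⁻¹ :=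
        Finset.prod_congr rfl fun i _ => rfl
      have hc : (∏ i, (x.left (x.right i))⁻¹) = (∏ i, x.left i)⁻¹ := by
        rw [Equiv.prod_comp x.right fun i => (x.left i)⁻¹, ← Finset.prod_inv_distrib]
      rw [hb, hc, inv_pow, hx2, inv_one]

variable (ℓ : ℕ) [Fact ℓ.Prime]

/-- The `ℤ_ℓ`-module `ℚ_ℓ/ℤ_ℓ` (`= ℤ_ℓ/ℓ^∞`). -/
abbrev QmodZ : Type :=
  ℚ_[ℓ] ⧸ (Submodule.span ℤ_[ℓ] ({1} : Set ℚ_[ℓ]))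

/-- The centraliser `C_W(t)` of a point `t` of the discrete torus
`T̆ = (ℤ_ℓ/ℓ^∞)^n` inside `W = G(e,r,n)`, where a monomial matrix `x` acts on `T̆` by
`(x • t) i = x.left i • t (x.right⁻¹ i)`. -/
def torusCentralizer (e r n : ℕ) (t : Fin n → QmodZ ℓ) :
    Subgroup (Wreath ℤ_[ℓ]ˣ n) where
  carrier := {x | x ∈ Gerr ℤ_[ℓ]ˣ e r n ∧
    ∀ i, ((x.left i : ℤ_[ℓ])) • t (x.right.symm i) = t i}
  one_mem' := by
    refine ⟨(Gerr ℤ_[ℓ]ˣ e r n).one_mem, fun i => ?_⟩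
    show (((1 : Fin n → ℤ_[ℓ]ˣ) i : ℤ_[ℓ])) • t ((1 : Equiv.Perm (Fin n)).symm i) = t i
    simp
    rfl
  mul_mem' := by
    rintro x y ⟨hx, hx2⟩ ⟨hy, hy2⟩
    refine ⟨(Gerr ℤ_[ℓ]ˣ e r n).mul_mem hx hy, fun i => ?_⟩
    have h1 : (x * y).left i = x.left i * y.left (x.right.symm i) := rfl
    have h2 : (x * y).right.symm i = y.right.symm (x.right.symm i) := rfl
    rw [h1, h2, Units.val_mul, mul_smul, hy2, hx2]
  inv_mem' := by
    rintro x ⟨hx, hx2⟩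
    refine ⟨(Gerr ℤ_[ℓ]ˣ e r n).inv_mem hx, fun i => ?_⟩
    have h1 : (x⁻¹).left i = (x.left (x.right i))⁻¹ := rfl
    have h2 : (x⁻¹).right.symm i = x.right i := rfl
    rw [h1, h2]
    have := hx2 (x.right i)
    rw [Equiv.symm_apply_apply] at this
    rw [← this, ← mul_smul, ← Units.val_mul, inv_mul_cancel, Units.val_one, one_smul]

/-- The reflection representation of the monomial group on the lattice
`L = ℤ_ℓ^n`. -/
noncomputable def linAct (n : ℕ) (x : Wreath ℤ_[ℓ]ˣ n) :
    (Fin n → ℤ_[ℓ]) →ₗ[ℤ_[ℓ]] (Fin n → ℤ_[ℓ]) where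
  toFun v := fun i => (x.left i : ℤ_[ℓ]) * v (x.right.symm i)
  map_add' := by intro a b; funext i; simp [mul_add]
  map_smul' := by
    intro c a
    funext i
    simp only [Pi.smul_apply, smul_eq_mul, RingHom.id_apply]
    ring

/-- `x` is a reflection of `G(e,r,n)`: it is nontrivial and its fixed space in the
reflection representation on `ℤ_ℓ^n` has corank one. -/
def IsWreathReflection (n : ℕ) (x : Wreath ℤ_[ℓ]ˣ n) : Prop :=
  x ≠ 1 ∧
    Module.finrank ℤ_[ℓ] (LinearMap.ker (linAct ℓ n x - LinearMap.id)) + 1 = n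


lemma aux_smul_eq_zero {c : ℤ_[ℓ]} (hc : IsUnit c) {q : QmodZ ℓ} (h : c • q = 0) : q = 0 := by
  obtain ⟨x, rfl⟩ := Submodule.Quotient.mk_surjective _ q
  rw [← Submodule.Quotient.mk_smul, Submodule.Quotient.mk_eq_zero] at h
  rw [Submodule.Quotient.mk_eq_zero]
  obtain ⟨u, rfl⟩ := hc
  have : x = (↑u⁻¹ : ℤ_[ℓ]) • ((u : ℤ_[ℓ]) • x) := by
    rw [← mul_smul, ← Units.val_mul, inv_mul_cancel, Units.val_one, one_smul]
  rw [this]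
  exact Submodule.smul_mem _ _ h

lemma aux_isUnit_sub_one {e : ℕ} (heℓ : e ∣ ℓ - 1) {z : ℤ_[ℓ]}
    (hz : z ^ e = 1) (hz1 : z ≠ 1) : IsUnit (z - 1) := by
  by_contra h
  have hℓ : (2 : ℕ) ≤ ℓ := (Fact.out : ℓ.Prime).two_le
  have he0 : e ≠ 0 := by
    rintro rfl
    rw [Nat.zero_dvd] at heℓ
    omega
  have heu : IsUnit ((e : ℤ_[ℓ])) := by
    rw [PadicInt.isUnit_iff]
    by_contra hne
    have hlt : ‖((e : ℤ) : ℤ_[ℓ])‖ < 1 :=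
      lt_of_le_of_ne (by exact_mod_cast PadicInt.norm_le_one _) (by exact_mod_cast hne)
    rw [PadicInt.norm_int_lt_one_iff_dvd] at hlt
    have : (ℓ : ℤ) ∣ (e : ℤ) := hlt
    have hdvd : ℓ ∣ e := by exact_mod_cast this
    have : e ≤ ℓ - 1 := Nat.le_of_dvd (by omega) heℓ
    have := Nat.le_of_dvd (Nat.pos_of_ne_zero he0) hdvd
    omega
  -- z - 1 in maximal ideal
  have hmem : z - 1 ∈ IsLocalRing.maximalIdeal ℤ_[ℓ] := by
    rwa [IsLocalRing.mem_maximalIdeal, mem_nonunits_iff]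
  set S : ℤ_[ℓ] := ∑ i ∈ Finset.range e, z ^ i with hS
  have hS0 : S * (z - 1) = 0 := by rw [geom_sum_mul, hz, sub_self]
  have hSz : S = 0 ∨ z - 1 = 0 := mul_eq_zero.mp hS0
  have hz1' : z - 1 ≠ 0 := sub_ne_zero.mpr hz1
  have hS00 : S = 0 := hSz.resolve_right hz1'
  have hSe : S - (e : ℤ_[ℓ]) ∈ IsLocalRing.maximalIdeal ℤ_[ℓ] := by
    have : S - (e : ℤ_[ℓ]) = ∑ i ∈ Finset.range e, (z ^ i - 1) := by
      rw [Finset.sum_sub_distrib, Finset.sum_const, Finset.card_range, nsmul_eq_mul, mul_one]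
    rw [this]
    refine Submodule.sum_mem _ fun i _ => ?_
    obtain ⟨c, hc⟩ : z - 1 ∣ z ^ i - 1 := by
      simpa using sub_dvd_pow_sub_pow z 1 i
    rw [hc]
    exact Ideal.mul_mem_right _ _ hmem
  have : (e : ℤ_[ℓ]) ∈ IsLocalRing.maximalIdeal ℤ_[ℓ] := by
    have := Submodule.sub_mem _ (hS00 ▸ (IsLocalRing.maximalIdeal ℤ_[ℓ]).zero_mem) hSe
    simpa using this
  rw [IsLocalRing.mem_maximalIdeal, mem_nonunits_iff] at this
  exact this heu

lemma aux_unique {e : ℕ} (heℓ : e ∣ ℓ - 1) {ζ ζ' : ℤ_[ℓ]ˣ}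
    (h : ζ ^ e = 1) (h' : ζ' ^ e = 1) {lam : QmodZ ℓ} (hlam : lam ≠ 0)
    (hs : (ζ : ℤ_[ℓ]) • lam = (ζ' : ℤ_[ℓ]) • lam) : ζ = ζ' := by
  set z : ℤ_[ℓ]ˣ := ζ'⁻¹ * ζ with hzdef
  have hze : z ^ e = 1 := by
    rw [hzdef, mul_pow, h, inv_pow, h', inv_one, one_mul]
  have hzfix : ((z : ℤ_[ℓ]) - 1) • lam = 0 := by
    rw [sub_smul, one_smul, sub_eq_zero, Units.val_mul, mul_smul, hs, ← mul_smul,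
      ← Units.val_mul, inv_mul_cancel, Units.val_one, one_smul]
  by_cases hz1 : z = 1
  · rw [hzdef] at hz1
    exact (inv_mul_eq_one.mp hz1).symm
  · exfalso
    have hz1' : (z : ℤ_[ℓ]) ≠ 1 := fun hh => hz1 (Units.ext hh)
    have hze' : (z : ℤ_[ℓ]) ^ e = 1 := by rw [← Units.val_pow_eq_pow_val, hze, Units.val_one]
    exact hlam (aux_smul_eq_zero ℓ (aux_isUnit_sub_one ℓ heℓ hze' hz1') hzfix)

section Zhat

/-- The selected `e`-th root of unity relating `t a` and `t b` (or `1`). -/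
noncomputable def zhat (e : ℕ) {n : ℕ} (t : Fin n → QmodZ ℓ) (a b : Fin n) : ℤ_[ℓ]ˣ :=
  letI := Classical.dec (∃ ζ : ℤ_[ℓ]ˣ, ζ ^ e = 1 ∧ t a = (ζ : ℤ_[ℓ]) • t b)
  if h : ∃ ζ : ℤ_[ℓ]ˣ, ζ ^ e = 1 ∧ t a = (ζ : ℤ_[ℓ]) • t b then h.choose else 1

lemma zhat_spec {e : ℕ} {n : ℕ} {t : Fin n → QmodZ ℓ} {a b : Fin n}
    (h : ∃ ζ : ℤ_[ℓ]ˣ, ζ ^ e = 1 ∧ t a = (ζ : ℤ_[ℓ]) • t b) :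
    zhat ℓ e t a b ^ e = 1 ∧ t a = (zhat ℓ e t a b : ℤ_[ℓ]) • t b := by
  rw [zhat]
  rw [dif_pos h]
  exact h.choose_spec

lemma zhat_eq {e : ℕ} (heℓ : e ∣ ℓ - 1) {n : ℕ} {t : Fin n → QmodZ ℓ} {a b : Fin n}
    (hb : t b ≠ 0) {ζ : ℤ_[ℓ]ˣ} (hζ : ζ ^ e = 1) (hrel : t a = (ζ : ℤ_[ℓ]) • t b) :
    zhat ℓ e t a b = ζ := by
  have h : ∃ ζ : ℤ_[ℓ]ˣ, ζ ^ e = 1 ∧ t a = (ζ : ℤ_[ℓ]) • t b := ⟨ζ, hζ, hrel⟩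
  obtain ⟨h1, h2⟩ := zhat_spec ℓ h
  exact aux_unique ℓ heℓ h1 hζ hb (h2.symm.trans hrel)

lemma exists_rel_symm {e : ℕ} {n : ℕ} {t : Fin n → QmodZ ℓ} {a b : Fin n}
    (h : ∃ ζ : ℤ_[ℓ]ˣ, ζ ^ e = 1 ∧ t a = (ζ : ℤ_[ℓ]) • t b) :
    ∃ ζ : ℤ_[ℓ]ˣ, ζ ^ e = 1 ∧ t b = (ζ : ℤ_[ℓ]) • t a := by
  obtain ⟨ζ, h1, h2⟩ := h
  refine ⟨ζ⁻¹, by rw [inv_pow, h1, inv_one], ?_⟩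
  rw [h2, ← mul_smul, ← Units.val_mul, inv_mul_cancel, Units.val_one, one_smul]

lemma exists_rel_trans {e : ℕ} {n : ℕ} {t : Fin n → QmodZ ℓ} {a b c : Fin n}
    (h : ∃ ζ : ℤ_[ℓ]ˣ, ζ ^ e = 1 ∧ t a = (ζ : ℤ_[ℓ]) • t b)
    (h' : ∃ ζ : ℤ_[ℓ]ˣ, ζ ^ e = 1 ∧ t b = (ζ : ℤ_[ℓ]) • t c) :
    ∃ ζ : ℤ_[ℓ]ˣ, ζ ^ e = 1 ∧ t a = (ζ : ℤ_[ℓ]) • t c := by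
  obtain ⟨ζ, h1, h2⟩ := h
  obtain ⟨ζ', h1', h2'⟩ := h'
  exact ⟨ζ * ζ', by rw [mul_pow, h1, h1', one_mul],
    by rw [h2, h2', ← mul_smul, ← Units.val_mul]⟩

lemma zhat_self {e : ℕ} (heℓ : e ∣ ℓ - 1) {n : ℕ} {t : Fin n → QmodZ ℓ} {a : Fin n}
    (ha : t a ≠ 0) : zhat ℓ e t a a = 1 :=
  zhat_eq ℓ heℓ ha (one_pow e) (by rw [Units.val_one, one_smul])

lemma zhat_comp {e : ℕ} (heℓ : e ∣ ℓ - 1) {n : ℕ} {t : Fin n → QmodZ ℓ} {a b c : Fin n}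
    (hc : t c ≠ 0)
    (hab : ∃ ζ : ℤ_[ℓ]ˣ, ζ ^ e = 1 ∧ t a = (ζ : ℤ_[ℓ]) • t b)
    (hbc : ∃ ζ : ℤ_[ℓ]ˣ, ζ ^ e = 1 ∧ t b = (ζ : ℤ_[ℓ]) • t c) :
    zhat ℓ e t a b * zhat ℓ e t b c = zhat ℓ e t a c := by
  obtain ⟨p1, p2⟩ := zhat_spec ℓ hab
  obtain ⟨q1, q2⟩ := zhat_spec ℓ hbc
  refine (zhat_eq ℓ heℓ hc (by rw [mul_pow, p1, q1, one_mul]) ?_).symm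
  rw [p2, q2, ← mul_smul, ← Units.val_mul]

end Zhat

section ProdT

lemma prod_nonzero_eq_one {e : ℕ} (heℓ : e ∣ ℓ - 1) {n : ℕ} {t : Fin n → QmodZ ℓ}
    [Fintype {i : Fin n // t i ≠ 0}]
    {s : ℕ} {u : Fin s → ℕ} (Φ : {i : Fin n // t i ≠ 0} ≃ ((j : Fin s) × Fin (u j)))
    (hΦ : ∀ i i' : {i : Fin n // t i ≠ 0}, (Φ i).1 = (Φ i').1 ↔
      ∃ ζ : ℤ_[ℓ]ˣ, ζ ^ e = 1 ∧ t i.1 = (ζ : ℤ_[ℓ]) • t i'.1)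
    (σ : Equiv.Perm (Fin n))
    (hσ : ∀ i : Fin n, t i ≠ 0 ↔ t (σ.symm i) ≠ 0)
    (δ : Fin n → ℤ_[ℓ]ˣ)
    (hδe : ∀ i, t i ≠ 0 → δ i ^ e = 1)
    (hδ : ∀ i, t i ≠ 0 → t i = (δ i : ℤ_[ℓ]) • t (σ.symm i)) :
    ∏ i : {i : Fin n // t i ≠ 0}, δ i.1 = 1 := by
  let σN : Equiv.Perm {i : Fin n // t i ≠ 0} := Equiv.Perm.subtypePerm σ.symm (fun i => (hσ i).symm)
  let rep0 : ∀ j : Fin s, 0 < u j → {i : Fin n // t i ≠ 0} := fun j h => Φ.symm ⟨j, ⟨0, h⟩⟩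
  have rep0_congr : ∀ (j j' : Fin s) (h : 0 < u j) (h' : 0 < u j'), j = j' →
      rep0 j h = rep0 j' h' := by rintro j _ h h' rfl; rfl
  let rep : {i : Fin n // t i ≠ 0} → {i : Fin n // t i ≠ 0} := fun m => rep0 (Φ m).1 (Φ m).2.pos
  have hrep_class : ∀ m, (Φ (rep m)).1 = (Φ m).1 := fun m => by
    simp only [rep, rep0, Equiv.apply_symm_apply]
  let w : {i : Fin n // t i ≠ 0} → ℤ_[ℓ]ˣ := fun m => zhat ℓ e t m.1 (rep m).1
  have hw : ∀ m : {i : Fin n // t i ≠ 0}, w m ^ e = 1 ∧ t m.1 = (w m : ℤ_[ℓ]) • t (rep m).1 := fun m =>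
    zhat_spec ℓ ((hΦ m (rep m)).1 (hrep_class m).symm)
  have key : ∀ m : {i : Fin n // t i ≠ 0}, w m = δ m.1 * w (σN m) := by
    intro m
    have hσNm : (σN m).1 = σ.symm m.1 := rfl
    have hcls : (Φ m).1 = (Φ (σN m)).1 :=
      (hΦ m (σN m)).2 ⟨δ m.1, hδe m.1 m.2, by rw [hσNm]; exact hδ m.1 m.2⟩
    have hrep : rep (σN m) = rep m := rep0_congr _ _ _ _ hcls.symm
    have hrel : t m.1 = ((δ m.1 * w (σN m) : ℤ_[ℓ]ˣ) : ℤ_[ℓ]) • t (rep m).1 := by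
      rw [Units.val_mul, mul_smul, ← hrep]
      rw [← (hw (σN m)).2, ← hσNm] at *
      exact hδ m.1 m.2
    exact zhat_eq ℓ heℓ (rep m).2 (by rw [mul_pow, hδe m.1 m.2, (hw (σN m)).1, one_mul]) hrel
  have key' : ∀ m : {i : Fin n // t i ≠ 0}, δ m.1 = w m * (w (σN m))⁻¹ := by
    intro m
    rw [key m, mul_inv_cancel_right]
  calc ∏ m : {i : Fin n // t i ≠ 0}, δ m.1 = ∏ m : {i : Fin n // t i ≠ 0}, (w m * (w (σN m))⁻¹) := Finset.prod_congr rfl fun m _ => key' m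
    _ = (∏ m : {i : Fin n // t i ≠ 0}, w m) * (∏ m : {i : Fin n // t i ≠ 0}, (w (σN m))⁻¹) := Finset.prod_mul_distrib
    _ = (∏ m : {i : Fin n // t i ≠ 0}, w m) * (∏ m : {i : Fin n // t i ≠ 0}, w (σN m))⁻¹ := by rw [Finset.prod_inv_distrib]
    _ = 1 := by rw [Equiv.prod_comp σN w, mul_inv_cancel]

end ProdT

section Refl

lemma linAct_apply' {n : ℕ} (x : Wreath ℤ_[ℓ]ˣ n) (v : Fin n → ℤ_[ℓ]) (i : Fin n) :
    linAct ℓ n x v = fun i => (x.left i : ℤ_[ℓ]) * v (x.right.symm i) := rfl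

lemma mem_ker_linAct_iff {n : ℕ} (x : Wreath ℤ_[ℓ]ˣ n) (v : Fin n → ℤ_[ℓ]) :
    v ∈ LinearMap.ker (linAct ℓ n x - LinearMap.id) ↔
      ∀ i, (x.left i : ℤ_[ℓ]) * v (x.right.symm i) = v i := by
  rw [LinearMap.mem_ker, LinearMap.sub_apply, LinearMap.id_apply, sub_eq_zero]
  constructor
  · intro h i
    exact congrFun h i
  · intro h
    funext i
    exact h i

lemma finrank_ker_eq {n : ℕ} (a : Fin n)
    (φ : ({i : Fin n // i ≠ a} → ℤ_[ℓ]) →ₗ[ℤ_[ℓ]] ℤ_[ℓ])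
    (K : Submodule ℤ_[ℓ] (Fin n → ℤ_[ℓ]))
    (hK : ∀ v, v ∈ K ↔ v a = φ (fun i => v i.1)) :
    Module.finrank ℤ_[ℓ] K + 1 = n := by
  classical
  let res : K →ₗ[ℤ_[ℓ]] ({i : Fin n // i ≠ a} → ℤ_[ℓ]) :=
    { toFun := fun v i => v.1 i.1
      map_add' := fun v w => rfl
      map_smul' := fun c v => rfl }
  have hinj : Function.Injective res := by
    rintro ⟨v, hv⟩ ⟨w, hw⟩ h
    have hrestr : ∀ i : {i : Fin n // i ≠ a}, v i.1 = w i.1 := fun i => congrFun h i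
    ext i
    show v i = w i
    by_cases hi : i = a
    · subst hi
      have h2 : (fun j : {j : Fin n // j ≠ i} => v j.1) = fun j => w j.1 := funext hrestr
      rw [(hK v).1 hv, (hK w).1 hw, h2]
    · exact hrestr ⟨i, hi⟩
  have hsurj : Function.Surjective res := by
    intro f
    have hmem : (fun i => if h : i = a then φ f else f ⟨i, h⟩) ∈ K := by
      rw [hK]
      have h1 : (fun i : {i : Fin n // i ≠ a} =>
          (fun i => if h : i = a then φ f else f ⟨i, h⟩) i.1) = f := by
        funext i
        show (if h : i.1 = a then φ f else f ⟨i.1, h⟩) = f i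
        rw [dif_neg i.2]
      rw [dif_pos rfl, h1]
    refine ⟨⟨_, hmem⟩, ?_⟩
    funext i
    show (if h : i.1 = a then φ f else f ⟨i.1, h⟩) = f i
    rw [dif_neg i.2]
  let eqv := LinearEquiv.ofBijective res ⟨hinj, hsurj⟩
  rw [eqv.finrank_eq, Module.finrank_fintype_fun_eq_card]
  have hcard : Fintype.card {i : Fin n // ¬ i = a} = n - 1 := by
    rw [Fintype.card_subtype_compl, Fintype.card_subtype_eq, Fintype.card_fin]
  have hcard' : Fintype.card {i : Fin n // i ≠ a} = n - 1 := hcard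
  rw [hcard']
  have := a.pos
  omega


/-- A diagonal monomial matrix with a single entry `ζ` at `a`. -/
noncomputable def diagElem {n : ℕ} (a : Fin n) (ζ : ℤ_[ℓ]ˣ) : Wreath ℤ_[ℓ]ˣ n :=
  ⟨fun i => if i = a then ζ else 1, 1⟩

/-- A decorated transposition. -/
noncomputable def swapElem {n : ℕ} (a b : Fin n) (ζ : ℤ_[ℓ]ˣ) : Wreath ℤ_[ℓ]ˣ n :=
  ⟨fun i => if i = a then ζ else if i = b then ζ⁻¹ else 1, Equiv.swap a b⟩

lemma isRefl_diagElem {n : ℕ} (a : Fin n) (ζ : ℤ_[ℓ]ˣ) (hζ : ζ ≠ 1) :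
    IsWreathReflection ℓ n (diagElem ℓ a ζ) := by
  constructor
  · intro h
    have := congrFun (congrArg SemidirectProduct.left h) a
    simp only [diagElem, if_pos rfl] at this
    exact hζ this
  · have hζ' : ((ζ : ℤ_[ℓ]) - 1) ≠ 0 := by
      rw [sub_ne_zero]
      intro hh
      exact hζ (Units.ext hh)
    have hmem : ∀ v, v ∈ LinearMap.ker (linAct ℓ n (diagElem ℓ a ζ) - LinearMap.id) ↔
        v a = (0 : ({i : Fin n // i ≠ a} → ℤ_[ℓ]) →ₗ[ℤ_[ℓ]] ℤ_[ℓ]) (fun i => v i.1) := by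
      intro v
      rw [mem_ker_linAct_iff, LinearMap.zero_apply]
      constructor
      · intro h
        have ha := h a
        simp only [diagElem, if_pos rfl] at ha
        have : ((ζ : ℤ_[ℓ]) - 1) * v a = 0 := by
          rw [sub_mul, one_mul, sub_eq_zero]
          exact ha
        rcases mul_eq_zero.mp this with h' | h'
        · exact absurd h' hζ'
        · exact h'
      · intro h i
        show ((if i = a then ζ else 1 : ℤ_[ℓ]ˣ) : ℤ_[ℓ]) * v i = v i
        by_cases hi : i = a
        · subst hi
          rw [if_pos rfl, h, mul_zero]
        · rw [if_neg hi, Units.val_one, one_mul]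
    have := finrank_ker_eq ℓ a 0 _ hmem
    exact this

lemma isRefl_swapElem {n : ℕ} (a b : Fin n) (hab : a ≠ b) (ζ : ℤ_[ℓ]ˣ) :
    IsWreathReflection ℓ n (swapElem ℓ a b ζ) := by
  constructor
  · intro h
    have := congrArg SemidirectProduct.right h
    simp only [swapElem] at this
    have h2 := congrFun (congrArg (fun (f : Equiv.Perm (Fin n)) => (f : Fin n → Fin n)) this) a
    simp only [Equiv.swap_apply_left] at h2
    exact hab (h2.symm)
  · have hba : b ≠ a := hab.symm
    have hmem : ∀ v, v ∈ LinearMap.ker (linAct ℓ n (swapElem ℓ a b ζ) - LinearMap.id) ↔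
        v a = ((ζ : ℤ_[ℓ]) • (LinearMap.proj (⟨b, hba⟩ : {i : Fin n // i ≠ a}) : ({i : Fin n // i ≠ a} → ℤ_[ℓ]) →ₗ[ℤ_[ℓ]] ℤ_[ℓ]))
          (fun i => v i.1) := by
      intro v
      rw [mem_ker_linAct_iff]
      have hφ : ((ζ : ℤ_[ℓ]) • (LinearMap.proj (⟨b, hba⟩ : {i : Fin n // i ≠ a}) : ({i : Fin n // i ≠ a} → ℤ_[ℓ]) →ₗ[ℤ_[ℓ]] ℤ_[ℓ]))
          (fun i : {i : Fin n // i ≠ a} => v i.1) = (ζ : ℤ_[ℓ]) * v b := rfl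
      rw [hφ]
      have hsymm : (swapElem (ℓ := ℓ) a b ζ).right.symm = Equiv.swap a b := by
        show (Equiv.swap a b).symm = _
        exact Equiv.symm_swap a b
      constructor
      · intro h
        have ha := h a
        rw [hsymm] at ha
        simp only [swapElem, if_pos rfl, Equiv.swap_apply_left] at ha
        exact ha.symm
      · intro h i
        rw [hsymm]
        show ((if i = a then ζ else if i = b then ζ⁻¹ else 1 : ℤ_[ℓ]ˣ) : ℤ_[ℓ])
          * v (Equiv.swap a b i) = v i
        by_cases hia : i = a
        · subst hia
          rw [if_pos rfl, Equiv.swap_apply_left, ← h]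
        · by_cases hib : i = b
          · subst hib
            rw [if_neg hia, if_pos rfl, Equiv.swap_apply_right, h, ← mul_assoc,
              ← Units.val_mul, inv_mul_cancel, Units.val_one, one_mul]
          · rw [if_neg hia, if_neg hib, Equiv.swap_apply_of_ne_of_ne hia hib,
              Units.val_one, one_mul]
    exact finrank_ker_eq ℓ a _ _ hmem

end Refl


section Gen

variable (e r n : ℕ) (t : Fin n → QmodZ ℓ)

lemma wreath_mul_left {A : Type} [Group A] {n : ℕ} (x y : Wreath A n) (i : Fin n) :
    (x * y).left i = x.left i * y.left (x.right.symm i) := rfl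

lemma wreath_mul_right {A : Type} [Group A] {n : ℕ} (x y : Wreath A n) :
    (x * y).right = x.right * y.right := rfl

lemma tc_zero_iff {x : Wreath ℤ_[ℓ]ˣ n} (hx : x ∈ torusCentralizer ℓ e r n t) (i : Fin n) :
    t (x.right.symm i) = 0 ↔ t i = 0 := by
  obtain ⟨hg, hc⟩ := hx
  constructor
  · intro h
    rw [← hc i, h, smul_zero]
  · intro h
    have h2 : (x.left i : ℤ_[ℓ]) • t (x.right.symm i) = 0 := by rw [hc i, h]
    exact aux_smul_eq_zero ℓ (x.left i).isUnit h2

lemma swapElemZ_mem {a b : Fin n} (hab : a ≠ b) (ha : t a = 0) (hb : t b = 0)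
    {ζ : ℤ_[ℓ]ˣ} (hζ : ζ ^ e = 1) : swapElem ℓ a b ζ ∈ torusCentralizer ℓ e r n t := by
  refine ⟨⟨?_, ?_⟩, ?_⟩
  · intro i
    show (if i = a then ζ else if i = b then ζ⁻¹ else 1) ^ e = 1
    split_ifs with h1 h2
    · exact hζ
    · rw [inv_pow, hζ, inv_one]
    · exact one_pow e
  · have hprod : (∏ i, (swapElem ℓ a b ζ).left i) = ζ * ζ⁻¹ := by
      have := Finset.prod_eq_mul (s := Finset.univ) (f := (swapElem ℓ a b ζ).left) a b hab
        (fun c _ hc => by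
          show (if c = a then ζ else if c = b then ζ⁻¹ else 1) = 1
          rw [if_neg hc.1, if_neg hc.2])
        (fun h => absurd (Finset.mem_univ a) h)
        (fun h => absurd (Finset.mem_univ b) h)
      rw [this]
      show (if a = a then ζ else if a = b then ζ⁻¹ else 1) *
        (if b = a then ζ else if b = b then ζ⁻¹ else 1) = ζ * ζ⁻¹
      rw [if_pos rfl, if_neg hab.symm, if_pos rfl]
    rw [hprod, mul_inv_cancel, one_pow]
  · intro i
    have hsymm : (swapElem ℓ a b ζ).right.symm = Equiv.swap a b := Equiv.symm_swap a b
    rw [hsymm]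
    show ((if i = a then ζ else if i = b then ζ⁻¹ else 1 : ℤ_[ℓ]ˣ) : ℤ_[ℓ])
      • t (Equiv.swap a b i) = t i
    by_cases hia : i = a
    · subst hia
      rw [if_pos rfl, Equiv.swap_apply_left, hb, smul_zero, ha]
    · by_cases hib : i = b
      · subst hib
        rw [if_neg hia, if_pos rfl, Equiv.swap_apply_right, ha, smul_zero, hb]
      · rw [if_neg hia, if_neg hib, Equiv.swap_apply_of_ne_of_ne hia hib,
          Units.val_one, one_smul]

lemma diagElem_mem {a : Fin n} (ha : t a = 0) {ζ : ℤ_[ℓ]ˣ} (hζe : ζ ^ e = 1)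
    (hζr : ζ ^ (e / r) = 1) : diagElem ℓ a ζ ∈ torusCentralizer ℓ e r n t := by
  refine ⟨⟨?_, ?_⟩, ?_⟩
  · intro i
    show (if i = a then ζ else 1) ^ e = 1
    split_ifs
    · exact hζe
    · exact one_pow e
  · have hprod : (∏ i, (diagElem ℓ a ζ).left i) = ζ := by
      refine Finset.prod_eq_single a (fun b _ hb => ?_) (fun h => absurd (Finset.mem_univ a) h)
        |>.trans ?_
      · show (if b = a then ζ else 1) = 1
        rw [if_neg hb]
      · show (if a = a then ζ else 1) = ζ
        rw [if_pos rfl]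
    rw [hprod, hζr]
  · intro i
    show ((if i = a then ζ else 1 : ℤ_[ℓ]ˣ) : ℤ_[ℓ]) • t ((1 : Equiv.Perm (Fin n)).symm i) = t i
    by_cases hia : i = a
    · subst hia
      rw [if_pos rfl]
      show (ζ : ℤ_[ℓ]) • t i = t i
      rw [ha, smul_zero]
    · rw [if_neg hia, Units.val_one]
      show (1 : ℤ_[ℓ]) • t i = t i
      rw [one_smul]

/-- The canonical root of unity relating `t a` and `t b`, or `1` if `t b = 0`. -/
noncomputable def zbar (a b : Fin n) : ℤ_[ℓ]ˣ :=
  letI := Classical.dec (t b = 0)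
  if t b = 0 then 1 else zhat ℓ e t a b

variable {e n t} in
lemma zbar_props {a b : Fin n} (htab : t a = 0 ↔ t b = 0)
    (hab : t a ≠ 0 → ∃ ζ : ℤ_[ℓ]ˣ, ζ ^ e = 1 ∧ t a = (ζ : ℤ_[ℓ]) • t b) :
    zbar ℓ e n t a b ^ e = 1 ∧ t a = (zbar ℓ e n t a b : ℤ_[ℓ]) • t b := by
  rw [zbar]
  split_ifs with h
  · refine ⟨one_pow e, ?_⟩
    rw [Units.val_one, one_smul, h, htab.2 h]
  · have ha : t a ≠ 0 := fun h' => h (htab.1 h')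
    exact zhat_spec ℓ (hab ha)

variable {e n t} in
lemma zbar_mul_zbar (heℓ : e ∣ ℓ - 1) {a b : Fin n} (htab : t a = 0 ↔ t b = 0)
    (hab : t a ≠ 0 → ∃ ζ : ℤ_[ℓ]ˣ, ζ ^ e = 1 ∧ t a = (ζ : ℤ_[ℓ]) • t b) :
    zbar ℓ e n t a b * zbar ℓ e n t b a = 1 := by
  by_cases hb : t b = 0
  · have ha : t a = 0 := htab.2 hb
    rw [zbar, zbar]
    rw [if_pos hb, if_pos ha, one_mul]
  · have ha : t a ≠ 0 := fun h' => hb (htab.1 h')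
    rw [zbar, zbar, if_neg hb, if_neg ha]
    rw [zhat_comp ℓ heℓ ha (hab ha) (exists_rel_symm ℓ (hab ha)), zhat_self ℓ heℓ ha]

/-- The decorated transposition centralising `t`. -/
noncomputable def trElem (a b : Fin n) : Wreath ℤ_[ℓ]ˣ n :=
  ⟨fun i => if i = a then zbar ℓ e n t a b else if i = b then zbar ℓ e n t b a else 1,
    Equiv.swap a b⟩

variable {e n t} in
lemma trElem_eq_swapElem (heℓ : e ∣ ℓ - 1) {a b : Fin n} (htab : t a = 0 ↔ t b = 0)
    (hab : t a ≠ 0 → ∃ ζ : ℤ_[ℓ]ˣ, ζ ^ e = 1 ∧ t a = (ζ : ℤ_[ℓ]) • t b) :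
    trElem ℓ e n t a b = swapElem ℓ a b (zbar ℓ e n t a b) := by
  have h1 : zbar ℓ e n t b a = (zbar ℓ e n t a b)⁻¹ :=
    eq_inv_of_mul_eq_one_left (by rw [mul_comm]; exact zbar_mul_zbar ℓ heℓ htab hab)
  rw [trElem, swapElem, h1]

variable {e n t} in
lemma trElem_isRefl (heℓ : e ∣ ℓ - 1) {a b : Fin n} (hne : a ≠ b)
    (htab : t a = 0 ↔ t b = 0)
    (hab : t a ≠ 0 → ∃ ζ : ℤ_[ℓ]ˣ, ζ ^ e = 1 ∧ t a = (ζ : ℤ_[ℓ]) • t b) :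
    IsWreathReflection ℓ n (trElem ℓ e n t a b) := by
  rw [trElem_eq_swapElem ℓ heℓ htab hab]
  exact isRefl_swapElem ℓ a b hne _

variable {e n t} in
lemma trElem_mem (heℓ : e ∣ ℓ - 1) {a b : Fin n} (hne : a ≠ b)
    (htab : t a = 0 ↔ t b = 0)
    (hab : t a ≠ 0 → ∃ ζ : ℤ_[ℓ]ˣ, ζ ^ e = 1 ∧ t a = (ζ : ℤ_[ℓ]) • t b) :
    trElem ℓ e n t a b ∈ torusCentralizer ℓ e r n t := by
  have htba : t b = 0 ↔ t a = 0 := htab.symm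
  have hba : t b ≠ 0 → ∃ ζ : ℤ_[ℓ]ˣ, ζ ^ e = 1 ∧ t b = (ζ : ℤ_[ℓ]) • t a := fun hb =>
    exists_rel_symm ℓ (hab (fun h' => hb (htab.1 h')))
  obtain ⟨hpow1, hrel1⟩ := zbar_props ℓ htab hab
  obtain ⟨hpow2, hrel2⟩ := zbar_props ℓ htba hba
  refine ⟨⟨?_, ?_⟩, ?_⟩
  · intro i
    show (if i = a then zbar ℓ e n t a b else if i = b then zbar ℓ e n t b a else 1) ^ e = 1
    split_ifs with h1 h2
    · exact hpow1
    · exact hpow2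
    · exact one_pow e
  · have hprod : (∏ i, (trElem ℓ e n t a b).left i) = zbar ℓ e n t a b * zbar ℓ e n t b a := by
      have := Finset.prod_eq_mul (s := Finset.univ) (f := (trElem ℓ e n t a b).left) a b hne
        (fun c _ hc => by
          show (if c = a then _ else if c = b then _ else 1) = 1
          rw [if_neg hc.1, if_neg hc.2])
        (fun h => absurd (Finset.mem_univ a) h)
        (fun h => absurd (Finset.mem_univ b) h)
      rw [this]
      show (if a = a then _ else if a = b then _ else 1) *
        (if b = a then _ else if b = b then _ else 1) = _
      rw [if_pos rfl, if_neg hne.symm, if_pos rfl]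
    rw [hprod, zbar_mul_zbar ℓ heℓ htab hab, one_pow]
  · intro i
    have hsymm : (trElem ℓ e n t a b).right.symm = Equiv.swap a b := Equiv.symm_swap a b
    rw [hsymm]
    show ((if i = a then zbar ℓ e n t a b else if i = b then zbar ℓ e n t b a else 1 :
      ℤ_[ℓ]ˣ) : ℤ_[ℓ]) • t (Equiv.swap a b i) = t i
    by_cases hia : i = a
    · subst hia
      rw [if_pos rfl, Equiv.swap_apply_left, ← hrel1]
    · by_cases hib : i = b
      · subst hib
        rw [if_neg hia, if_pos rfl, Equiv.swap_apply_right, ← hrel2]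
      · rw [if_neg hia, if_neg hib, Equiv.swap_apply_of_ne_of_ne hia hib,
          Units.val_one, one_smul]

lemma swapElem_mul_swapElem_one {n : ℕ} (a b : Fin n) (hab : a ≠ b) (ζ : ℤ_[ℓ]ˣ) :
    swapElem ℓ a b ζ * swapElem ℓ a b 1 =
      ⟨fun i => if i = a then ζ else if i = b then ζ⁻¹ else 1, 1⟩ := by
  refine SemidirectProduct.ext ?_ ?_
  · funext i
    rw [wreath_mul_left]
    have hsymm : (swapElem ℓ a b ζ).right.symm = Equiv.swap a b := Equiv.symm_swap a b
    rw [hsymm]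
    show (if i = a then ζ else if i = b then ζ⁻¹ else 1) *
      (if Equiv.swap a b i = a then 1 else if Equiv.swap a b i = b then 1⁻¹ else 1) =
      (if i = a then ζ else if i = b then ζ⁻¹ else 1)
    by_cases hia : i = a
    · subst hia
      rw [Equiv.swap_apply_left]
      simp [hab, hab.symm]
    · by_cases hib : i = b
      · subst hib
        rw [Equiv.swap_apply_right]
        simp [hia, hab, hab.symm]
      · rw [Equiv.swap_apply_of_ne_of_ne hia hib]
        simp [hia, hib]
  · show Equiv.swap a b * Equiv.swap a b = 1
    rw [Equiv.swap_mul_self]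

end Gen


section Gen2

variable (e r n : ℕ) (t : Fin n → QmodZ ℓ)

/-- The set of reflections in the centraliser. -/
def reflSet : Set (torusCentralizer ℓ e r n t) :=
  {c : torusCentralizer ℓ e r n t | IsWreathReflection ℓ n (c : Wreath ℤ_[ℓ]ˣ n)}

variable {e r n t} in
lemma diag_gen (heℓ : e ∣ ℓ - 1) :
    ∀ (k : ℕ) (x : torusCentralizer ℓ e r n t), (x : Wreath ℤ_[ℓ]ˣ n).right = 1 →
      ∀ (inst : DecidablePred (fun a => (x : Wreath ℤ_[ℓ]ˣ n).left a ≠ 1)),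
      (Finset.univ.filter (fun a => (x : Wreath ℤ_[ℓ]ˣ n).left a ≠ 1)).card ≤ k →
      x ∈ Subgroup.closure (reflSet ℓ e r n t) := by
  intro k
  induction k with
  | zero =>
    intro x hr _ hcard
    have hF : (Finset.univ.filter (fun a => (x : Wreath ℤ_[ℓ]ˣ n).left a ≠ 1)) = ∅ :=
      Finset.card_eq_zero.mp (Nat.le_zero.mp hcard)
    have hleft : (x : Wreath ℤ_[ℓ]ˣ n).left = 1 := by
      funext a
      by_contra h
      have : a ∈ Finset.univ.filter (fun a => (x : Wreath ℤ_[ℓ]ˣ n).left a ≠ 1) :=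
        Finset.mem_filter.mpr ⟨Finset.mem_univ a, h⟩
      rw [hF] at this
      exact absurd this (Finset.notMem_empty a)
    have : x = 1 := Subtype.ext (SemidirectProduct.ext hleft hr)
    rw [this]
    exact Subgroup.one_mem _
  | succ k ih =>
    intro x hr inst hcard
    classical
    -- the nonzero coordinates of x are trivial
    have hN1 : ∀ i, t i ≠ 0 → (x : Wreath ℤ_[ℓ]ˣ n).left i = 1 := by
      intro i hi
      by_contra hne
      have hc := x.2.2 i
      rw [hr] at hc
      have hc' : ((x : Wreath ℤ_[ℓ]ˣ n).left i : ℤ_[ℓ]) • t i = t i := hc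
      have hsub : (((x : Wreath ℤ_[ℓ]ˣ n).left i : ℤ_[ℓ]) - 1) • t i = 0 := by
        rw [sub_smul, one_smul, hc', sub_self]
      have hpow : ((x : Wreath ℤ_[ℓ]ˣ n).left i : ℤ_[ℓ]) ^ e = 1 := by
        have := x.2.1.1 i
        rw [← Units.val_pow_eq_pow_val, this, Units.val_one]
      have hne' : ((x : Wreath ℤ_[ℓ]ˣ n).left i : ℤ_[ℓ]) ≠ 1 := fun h =>
        hne (Units.ext h)
      exact hi (aux_smul_eq_zero ℓ (aux_isUnit_sub_one ℓ heℓ hpow hne') hsub)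
    set F := Finset.univ.filter (fun a => (x : Wreath ℤ_[ℓ]ˣ n).left a ≠ 1) with hFdef
    by_cases hF0 : F.card = 0
    · exact ih x hr inst (by simp only [← hFdef]; omega)
    by_cases hF1 : F.card = 1
    · -- x is a diagonal reflection
      obtain ⟨a, hFa⟩ := Finset.card_eq_one.mp hF1
      have haF : a ∈ F := hFa ▸ Finset.mem_singleton_self a
      have hζne : (x : Wreath ℤ_[ℓ]ˣ n).left a ≠ 1 := (Finset.mem_filter.mp haF).2
      have hta : t a = 0 := by
        by_contra h
        exact hζne (hN1 a h)
      have hothers : ∀ b, b ≠ a → (x : Wreath ℤ_[ℓ]ˣ n).left b = 1 := by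
        intro b hb
        by_contra h
        have : b ∈ F := Finset.mem_filter.mpr ⟨Finset.mem_univ b, h⟩
        rw [hFa, Finset.mem_singleton] at this
        exact hb this
      set ζ := (x : Wreath ℤ_[ℓ]ˣ n).left a with hζdef
      have hprod : (∏ i, (x : Wreath ℤ_[ℓ]ˣ n).left i) = ζ :=
        Finset.prod_eq_single a (fun b _ hb => hothers b hb)
          (fun h => absurd (Finset.mem_univ a) h)
      have hζr : ζ ^ (e / r) = 1 := by
        have := x.2.1.2
        rwa [hprod] at this
      have hζe : ζ ^ e = 1 := x.2.1.1 a
      have hxval : (x : Wreath ℤ_[ℓ]ˣ n) = diagElem ℓ a ζ := by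
        refine SemidirectProduct.ext ?_ hr
        funext i
        show (x : Wreath ℤ_[ℓ]ˣ n).left i = if i = a then ζ else 1
        by_cases hi : i = a
        · rw [if_pos hi, hi]
        · rw [if_neg hi]
          exact hothers i hi
      have hxS : x ∈ reflSet ℓ e r n t := by
        show IsWreathReflection ℓ n (x : Wreath ℤ_[ℓ]ˣ n)
        rw [hxval]
        exact isRefl_diagElem ℓ a ζ hζne
      exact Subgroup.subset_closure hxS
    · -- at least two nontrivial entries
      have h2 : 1 < F.card := by omega
      obtain ⟨a, b, haF, hbF, hab⟩ := Finset.one_lt_card_iff.mp h2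
      have hta : t a = 0 := by
        by_contra h
        exact (Finset.mem_filter.mp haF).2 (hN1 a h)
      have htb : t b = 0 := by
        by_contra h
        exact (Finset.mem_filter.mp hbF).2 (hN1 b h)
      set ζ := ((x : Wreath ℤ_[ℓ]ˣ n).left a)⁻¹ with hζdef
      have hζe : ζ ^ e = 1 := by
        rw [hζdef, inv_pow, x.2.1.1 a, inv_one]
      have hζe1 : (1 : ℤ_[ℓ]ˣ) ^ e = 1 := one_pow e
      set P1 : torusCentralizer ℓ e r n t :=
        ⟨swapElem ℓ a b ζ, swapElemZ_mem ℓ e r n t hab hta htb hζe⟩ with hP1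
      set P2 : torusCentralizer ℓ e r n t :=
        ⟨swapElem ℓ a b 1, swapElemZ_mem ℓ e r n t hab hta htb hζe1⟩ with hP2
      set y := P1 * (P2 * x) with hy
      have hQ := swapElem_mul_swapElem_one ℓ a b hab ζ
      have hyval : (y : Wreath ℤ_[ℓ]ˣ n) =
          (⟨fun i => if i = a then ζ else if i = b then ζ⁻¹ else 1, 1⟩ :
            Wreath ℤ_[ℓ]ˣ n) * (x : Wreath ℤ_[ℓ]ˣ n) := by
        show swapElem ℓ a b ζ * (swapElem ℓ a b 1 * (x : Wreath ℤ_[ℓ]ˣ n)) = _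
        rw [← mul_assoc, hQ]
      have hyleft : ∀ i, (y : Wreath ℤ_[ℓ]ˣ n).left i =
          (if i = a then ζ else if i = b then ζ⁻¹ else 1) * (x : Wreath ℤ_[ℓ]ˣ n).left i := by
        intro i
        rw [hyval, wreath_mul_left]
        rfl
      have hyright : (y : Wreath ℤ_[ℓ]ˣ n).right = 1 := by
        rw [hyval, wreath_mul_right, hr]
        rfl
      have hsubset : (Finset.univ.filter (fun c => (y : Wreath ℤ_[ℓ]ˣ n).left c ≠ 1)) ⊆
          F.erase a := by
        intro c hc
        have hcy : (y : Wreath ℤ_[ℓ]ˣ n).left c ≠ 1 := (Finset.mem_filter.mp hc).2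
        rw [Finset.mem_erase]
        constructor
        · rintro rfl
          apply hcy
          rw [hyleft, if_pos rfl, hζdef, inv_mul_cancel]
        · by_contra hcF
          apply hcy
          have hc1 : (x : Wreath ℤ_[ℓ]ˣ n).left c = 1 := by
            by_contra h
            exact hcF (Finset.mem_filter.mpr ⟨Finset.mem_univ c, h⟩)
          have hcb : c ≠ b := by
            rintro rfl
            exact (Finset.mem_filter.mp hbF).2 hc1
          have hca : c ≠ a := by
            rintro rfl
            exact (Finset.mem_filter.mp haF).2 hc1
          rw [hyleft, if_neg hca, if_neg hcb, hc1, one_mul]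
      have hcard' : (Finset.univ.filter (fun c => (y : Wreath ℤ_[ℓ]ˣ n).left c ≠ 1)).card ≤ k := by
        have h1 := Finset.card_le_card hsubset
        have h2 := Finset.card_erase_of_mem haF
        omega
      have hyclosure : y ∈ Subgroup.closure (reflSet ℓ e r n t) :=
        ih y hyright _ hcard'
      have hP1S : P1 ∈ Subgroup.closure (reflSet ℓ e r n t) :=
        Subgroup.subset_closure (isRefl_swapElem ℓ a b hab ζ)
      have hP2S : P2 ∈ Subgroup.closure (reflSet ℓ e r n t) :=
        Subgroup.subset_closure (isRefl_swapElem ℓ a b hab 1)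
      have hx : x = P2⁻¹ * (P1⁻¹ * y) := by
        rw [hy, inv_mul_cancel_left, inv_mul_cancel_left]
      rw [hx]
      exact Subgroup.mul_mem _ (Subgroup.inv_mem _ hP2S)
        (Subgroup.mul_mem _ (Subgroup.inv_mem _ hP1S) hyclosure)

variable {e r n t} in
lemma perm_gen (heℓ : e ∣ ℓ - 1) :
    ∀ (m : ℕ) (x : torusCentralizer ℓ e r n t),
      ((x : Wreath ℤ_[ℓ]ˣ n).right.support.card ≤ m) →
      x ∈ Subgroup.closure (reflSet ℓ e r n t) := by
  intro m
  induction m with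
  | zero =>
    intro x hx
    classical
    have hr : (x : Wreath ℤ_[ℓ]ˣ n).right = 1 := by
      rw [← Equiv.Perm.support_eq_empty_iff, ← Finset.card_eq_zero]
      omega
    exact diag_gen ℓ heℓ
      ((Finset.univ.filter (fun a => (x : Wreath ℤ_[ℓ]ˣ n).left a ≠ 1)).card) x hr _ le_rfl
  | succ m ih =>
    intro x hx
    classical
    by_cases hr : (x : Wreath ℤ_[ℓ]ˣ n).right = 1
    · exact diag_gen ℓ heℓ
        ((Finset.univ.filter (fun a => (x : Wreath ℤ_[ℓ]ˣ n).left a ≠ 1)).card) x hr _ le_rfl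
    · set σ := (x : Wreath ℤ_[ℓ]ˣ n).right with hσdef
      have : ∃ a, σ a ≠ a := by
        by_contra h
        push_neg at h
        exact hr (Equiv.ext h)
      obtain ⟨a, ha⟩ := this
      set b := σ a with hbdef
      have hba : b ≠ a := ha
      have hsymmb : σ.symm b = a := Equiv.symm_apply_apply σ a
      -- hypotheses for the decorated transposition
      have htab : t a = 0 ↔ t b = 0 := by
        have := tc_zero_iff ℓ e r n t x.2 b
        rwa [hsymmb] at this
      have habE : t a ≠ 0 → ∃ ζ : ℤ_[ℓ]ˣ, ζ ^ e = 1 ∧ t a = (ζ : ℤ_[ℓ]) • t b := by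
        intro _
        have hc := x.2.2 b
        rw [hsymmb] at hc
        exact exists_rel_symm ℓ ⟨(x : Wreath ℤ_[ℓ]ˣ n).left b, x.2.1.1 b, hc.symm⟩
      set τ : torusCentralizer ℓ e r n t :=
        ⟨trElem ℓ e n t a b, trElem_mem ℓ r heℓ hba.symm htab habE⟩ with hτ
      set y := τ * x with hy
      have hyright : (y : Wreath ℤ_[ℓ]ˣ n).right = Equiv.swap a b * σ := rfl
      have hcard : (y : Wreath ℤ_[ℓ]ˣ n).right.support.card ≤ m := by
        rw [hyright, hbdef]
        have := Equiv.Perm.card_support_swap_mul (f := σ) (x := a) ha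
        have h2 : σ.support.card ≤ m + 1 := hx
        omega
      have hyclosure := ih y hcard
      have hτS : τ ∈ Subgroup.closure (reflSet ℓ e r n t) :=
        Subgroup.subset_closure (trElem_isRefl ℓ heℓ hba.symm htab habE)
      have hxeq : x = τ⁻¹ * y := by rw [hy, inv_mul_cancel_left]
      rw [hxeq]
      exact Subgroup.mul_mem _ (Subgroup.inv_mem _ hτS) hyclosure

variable {e r n t} in
lemma closure_reflSet_eq_top (heℓ : e ∣ ℓ - 1) :
    Subgroup.closure (reflSet ℓ e r n t) = ⊤ := by
  rw [Subgroup.eq_top_iff']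
  intro x
  exact perm_gen ℓ heℓ (x : Wreath ℤ_[ℓ]ˣ n).right.support.card x le_rfl

end Gen2


section Theta

lemma sigmaCongrRight_key {s : ℕ} {u : Fin s → ℕ}
    (p : (j : Fin s) × Fin (u j)) (j : Fin s) (h : p.1 = j) :
    (⟨j, finCongr (congrArg u h) p.2⟩ : (j : Fin s) × Fin (u j)) = p := by
  obtain ⟨j', k'⟩ := p
  dsimp at h
  subst h
  rfl

lemma sigmaCongrRight_surj {s : ℕ} {u : Fin s → ℕ} (q : Equiv.Perm ((j : Fin s) × Fin (u j)))
    (hq : ∀ p, (q p).1 = p.1) :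
    ∃ π : (j : Fin s) → Equiv.Perm (Fin (u j)), Equiv.sigmaCongrRight π = q := by
  have hq' : ∀ p, (q.symm p).1 = p.1 := fun p => by
    rw [← hq (q.symm p), q.apply_symm_apply]
  let f : ∀ j, Fin (u j) → Fin (u j) := fun j k =>
    finCongr (congrArg u (hq ⟨j, k⟩)) (q ⟨j, k⟩).2
  let g : ∀ j, Fin (u j) → Fin (u j) := fun j k =>
    finCongr (congrArg u (hq' ⟨j, k⟩)) (q.symm ⟨j, k⟩).2
  have hf : ∀ j k, (⟨j, f j k⟩ : (j : Fin s) × Fin (u j)) = q ⟨j, k⟩ := fun j k =>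
    sigmaCongrRight_key _ j (hq ⟨j, k⟩)
  have hg : ∀ j k, (⟨j, g j k⟩ : (j : Fin s) × Fin (u j)) = q.symm ⟨j, k⟩ := fun j k =>
    sigmaCongrRight_key _ j (hq' ⟨j, k⟩)
  have hsnd : ∀ (j : Fin s) (k k' : Fin (u j)),
      (⟨j, k⟩ : (j : Fin s) × Fin (u j)) = ⟨j, k'⟩ → k = k' := by
    intro j k k' h
    obtain ⟨-, h2⟩ := Sigma.mk.inj_iff.mp h
    exact eq_of_heq h2
  refine ⟨fun j => ⟨f j, g j, ?_, ?_⟩, ?_⟩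
  · intro k
    apply hsnd j
    rw [hg j (f j k), hf j k, Equiv.symm_apply_apply]
  · intro k
    apply hsnd j
    rw [hf j (g j k), hg j k, Equiv.apply_symm_apply]
  · apply Equiv.ext
    rintro ⟨j, k⟩
    show (⟨j, f j k⟩ : (j : Fin s) × Fin (u j)) = q ⟨j, k⟩
    exact hf j k

variable (e r n u₀ : ℕ) (t : Fin n → QmodZ ℓ) {s : ℕ} {u : Fin s → ℕ}
  [inst0 : DecidablePred (fun i : Fin n => t i = 0)]
  (ε : {i : Fin n // t i = 0} ≃ Fin u₀)
  (Φ : {i : Fin n // t i ≠ 0} ≃ ((j : Fin s) × Fin (u j)))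

/-- Permutation of the zero block induced by `ρ`. -/
def sigZ (ρ : Equiv.Perm (Fin u₀)) : Equiv.Perm {i : Fin n // t i = 0} :=
  (ε.trans ρ).trans ε.symm

/-- Permutation of the nonzero block induced by `π`. -/
def sigN (π : (j : Fin s) → Equiv.Perm (Fin (u j))) : Equiv.Perm {i : Fin n // t i ≠ 0} :=
  (Φ.trans (Equiv.sigmaCongrRight π)).trans Φ.symm

/-- The permutation part of the image of `((d, ρ), π)`. -/
def bigPerm (ρ : Equiv.Perm (Fin u₀)) (π : (j : Fin s) → Equiv.Perm (Fin (u j))) :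
    Equiv.Perm (Fin n) :=
  Equiv.Perm.subtypeCongr (sigZ ℓ n u₀ t ε ρ) (sigN ℓ n t Φ π)

/-- The diagonal part of the image of `((d, ρ), π)`. -/
noncomputable def bigDiag (d : Fin u₀ → ℤ_[ℓ]ˣ) (σ : Equiv.Perm (Fin n)) : Fin n → ℤ_[ℓ]ˣ :=
  fun i => if h : t i = 0 then d (ε ⟨i, h⟩) else zhat ℓ e t i (σ.symm i)

/-- The underlying map of the isomorphism, from `G(e,r,u₀) × ∏ S_{u j}` to the wreath
product. -/
noncomputable def Theta
    (gp : Gerr ℤ_[ℓ]ˣ e r u₀ × ((j : Fin s) → Equiv.Perm (Fin (u j)))) :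
    Wreath ℤ_[ℓ]ˣ n :=
  ⟨bigDiag ℓ e n u₀ t ε ((gp.1 : Wreath ℤ_[ℓ]ˣ u₀).left)
      (bigPerm ℓ n u₀ t ε Φ ((gp.1 : Wreath ℤ_[ℓ]ˣ u₀).right) gp.2),
    bigPerm ℓ n u₀ t ε Φ ((gp.1 : Wreath ℤ_[ℓ]ˣ u₀).right) gp.2⟩

variable {n u₀ t}

lemma bigPerm_symm_zero (ρ : Equiv.Perm (Fin u₀)) (π : (j : Fin s) → Equiv.Perm (Fin (u j)))
    {i : Fin n} (h : t i = 0) :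
    (bigPerm ℓ n u₀ t ε Φ ρ π).symm i = ((sigZ ℓ n u₀ t ε ρ).symm ⟨i, h⟩).1 := by
  rw [bigPerm, Equiv.Perm.subtypeCongr.symm, Equiv.Perm.subtypeCongr.left_apply (p := fun i : Fin n => t i = 0) _ _ h]

lemma bigPerm_symm_nonzero (ρ : Equiv.Perm (Fin u₀)) (π : (j : Fin s) → Equiv.Perm (Fin (u j)))
    {i : Fin n} (h : ¬ t i = 0) :
    (bigPerm ℓ n u₀ t ε Φ ρ π).symm i = ((sigN ℓ n t Φ π).symm ⟨i, h⟩).1 := by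
  rw [bigPerm, Equiv.Perm.subtypeCongr.symm, Equiv.Perm.subtypeCongr.right_apply (p := fun i : Fin n => t i = 0) _ _ h]

lemma bigPerm_apply_zero (ρ : Equiv.Perm (Fin u₀)) (π : (j : Fin s) → Equiv.Perm (Fin (u j)))
    {i : Fin n} (h : t i = 0) :
    bigPerm ℓ n u₀ t ε Φ ρ π i = ((sigZ ℓ n u₀ t ε ρ) ⟨i, h⟩).1 :=
  Equiv.Perm.subtypeCongr.left_apply (p := fun i : Fin n => t i = 0) _ _ h

lemma bigPerm_apply_nonzero (ρ : Equiv.Perm (Fin u₀)) (π : (j : Fin s) → Equiv.Perm (Fin (u j)))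
    {i : Fin n} (h : ¬ t i = 0) :
    bigPerm ℓ n u₀ t ε Φ ρ π i = ((sigN ℓ n t Φ π) ⟨i, h⟩).1 :=
  Equiv.Perm.subtypeCongr.right_apply (p := fun i : Fin n => t i = 0) _ _ h

lemma sigN_class (π : (j : Fin s) → Equiv.Perm (Fin (u j))) (m : {i : Fin n // t i ≠ 0}) :
    (Φ ((sigN ℓ n t Φ π) m)).1 = (Φ m).1 := by
  show (Φ (Φ.symm (Equiv.sigmaCongrRight π (Φ m)))).1 = (Φ m).1
  rw [Equiv.apply_symm_apply]
  rfl

lemma sigN_symm_class (π : (j : Fin s) → Equiv.Perm (Fin (u j))) (m : {i : Fin n // t i ≠ 0}) :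
    (Φ ((sigN ℓ n t Φ π).symm m)).1 = (Φ m).1 := by
  rw [← sigN_class ℓ Φ π ((sigN ℓ n t Φ π).symm m), Equiv.apply_symm_apply]

lemma hσ_bigPerm (ρ : Equiv.Perm (Fin u₀)) (π : (j : Fin s) → Equiv.Perm (Fin (u j))) :
    ∀ i : Fin n, t i ≠ 0 ↔ t ((bigPerm ℓ n u₀ t ε Φ ρ π).symm i) ≠ 0 := by
  intro i
  by_cases h : t i = 0
  · rw [bigPerm_symm_zero ℓ ε Φ ρ π h]
    simp only [h, ne_eq, not_true_eq_false, false_iff, not_not]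
    exact ((sigZ ℓ n u₀ t ε ρ).symm ⟨i, h⟩).2
  · rw [bigPerm_symm_nonzero ℓ ε Φ ρ π h]
    simp only [h, ne_eq, not_false_eq_true, true_iff]
    exact ((sigN ℓ n t Φ π).symm ⟨i, h⟩).2

end Theta


section Theta2

variable (e r n u₀ : ℕ) (t : Fin n → QmodZ ℓ) {s : ℕ} {u : Fin s → ℕ}
  [inst0 : DecidablePred (fun i : Fin n => t i = 0)]
  (ε : {i : Fin n // t i = 0} ≃ Fin u₀)
  (Φ : {i : Fin n // t i ≠ 0} ≃ ((j : Fin s) × Fin (u j)))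

variable {n u₀ t}

lemma sigZ_mul (ρ ρ' : Equiv.Perm (Fin u₀)) :
    sigZ ℓ n u₀ t ε (ρ * ρ') = sigZ ℓ n u₀ t ε ρ * sigZ ℓ n u₀ t ε ρ' := by
  apply Equiv.ext
  intro z
  show ε.symm ((ρ * ρ') (ε z)) = ε.symm (ρ (ε (ε.symm (ρ' (ε z)))))
  rw [Equiv.apply_symm_apply]
  rfl

lemma sigN_mul (π π' : (j : Fin s) → Equiv.Perm (Fin (u j))) :
    sigN ℓ n t Φ (fun j => π j * π' j) = sigN ℓ n t Φ π * sigN ℓ n t Φ π' := by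
  apply Equiv.ext
  intro m
  show Φ.symm (Equiv.sigmaCongrRight (π * π') (Φ m)) =
    Φ.symm (Equiv.sigmaCongrRight π (Φ (Φ.symm (Equiv.sigmaCongrRight π' (Φ m)))))
  rw [Equiv.apply_symm_apply]
  rfl

lemma bigPerm_mul (ρ ρ' : Equiv.Perm (Fin u₀)) (π π' : (j : Fin s) → Equiv.Perm (Fin (u j))) :
    bigPerm ℓ n u₀ t ε Φ (ρ * ρ') (fun j => π j * π' j) =
      bigPerm ℓ n u₀ t ε Φ ρ π * bigPerm ℓ n u₀ t ε Φ ρ' π' := by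
  rw [bigPerm, sigZ_mul ℓ ε, sigN_mul ℓ Φ]
  exact (Equiv.Perm.subtypeCongr.trans _ _ _ _).symm

lemma bigPerm_exists_rel
    (hΦ : ∀ i i' : {i : Fin n // t i ≠ 0}, (Φ i).1 = (Φ i').1 ↔
      ∃ ζ : ℤ_[ℓ]ˣ, ζ ^ e = 1 ∧ t i.1 = (ζ : ℤ_[ℓ]) • t i'.1)
    (ρ : Equiv.Perm (Fin u₀)) (π : (j : Fin s) → Equiv.Perm (Fin (u j)))
    {i : Fin n} (h : ¬ t i = 0) :
    ∃ ζ : ℤ_[ℓ]ˣ, ζ ^ e = 1 ∧ t i = (ζ : ℤ_[ℓ]) • t ((bigPerm ℓ n u₀ t ε Φ ρ π).symm i) := by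
  have hcls := sigN_symm_class ℓ Φ π ⟨i, h⟩
  have hex := (hΦ ⟨i, h⟩ ((sigN ℓ n t Φ π).symm ⟨i, h⟩)).1 hcls.symm
  rwa [← bigPerm_symm_nonzero ℓ ε Φ ρ π h] at hex

lemma Theta_mem (heℓ : e ∣ ℓ - 1)
    (hΦ : ∀ i i' : {i : Fin n // t i ≠ 0}, (Φ i).1 = (Φ i').1 ↔
      ∃ ζ : ℤ_[ℓ]ˣ, ζ ^ e = 1 ∧ t i.1 = (ζ : ℤ_[ℓ]) • t i'.1)
    (gp : Gerr ℤ_[ℓ]ˣ e r u₀ × ((j : Fin s) → Equiv.Perm (Fin (u j)))) :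
    Theta ℓ e r n u₀ t ε Φ gp ∈ torusCentralizer ℓ e r n t := by
  set d := ((gp.1 : Wreath ℤ_[ℓ]ˣ u₀)).left with hd
  set ρ := ((gp.1 : Wreath ℤ_[ℓ]ˣ u₀)).right with hρ
  set π := gp.2 with hπ
  set σ := bigPerm ℓ n u₀ t ε Φ ρ π with hσdef
  have hdpow : ∀ k, d k ^ e = 1 := gp.1.2.1
  have hdprod : (∏ k, d k) ^ (e / r) = 1 := gp.1.2.2
  have hEx : ∀ (i : Fin n), ¬ t i = 0 →
      ∃ ζ : ℤ_[ℓ]ˣ, ζ ^ e = 1 ∧ t i = (ζ : ℤ_[ℓ]) • t (σ.symm i) := fun i h =>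
    bigPerm_exists_rel ℓ e ε Φ hΦ ρ π h
  have hdiag_nonzero : ∀ (i : Fin n) (h : ¬ t i = 0),
      bigDiag ℓ e n u₀ t ε d σ i = zhat ℓ e t i (σ.symm i) := fun i h => dif_neg h
  have hdiag_zero : ∀ (i : Fin n) (h : t i = 0),
      bigDiag ℓ e n u₀ t ε d σ i = d (ε ⟨i, h⟩) := fun i h => dif_pos h
  refine ⟨⟨?_, ?_⟩, ?_⟩
  · intro i
    show (bigDiag ℓ e n u₀ t ε d σ i) ^ e = 1
    by_cases h : t i = 0
    · rw [hdiag_zero i h]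
      exact hdpow _
    · rw [hdiag_nonzero i h]
      exact (zhat_spec ℓ (hEx i h)).1
  · show (∏ i, bigDiag ℓ e n u₀ t ε d σ i) ^ (e / r) = 1
    have hsplit := Fintype.prod_subtype_mul_prod_subtype (fun i : Fin n => t i = 0)
      (bigDiag ℓ e n u₀ t ε d σ)
    have hZ : (∏ z : {i : Fin n // t i = 0}, bigDiag ℓ e n u₀ t ε d σ z.1) = ∏ k, d k := by
      rw [← Equiv.prod_comp ε d]
      refine Finset.prod_congr rfl fun z _ => ?_
      rw [hdiag_zero z.1 z.2]
    have hN : (∏ m : {i : Fin n // ¬ t i = 0}, bigDiag ℓ e n u₀ t ε d σ m.1) = 1 := by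
      refine prod_nonzero_eq_one ℓ heℓ Φ hΦ σ (hσ_bigPerm ℓ ε Φ ρ π) _ ?_ ?_
      · intro i hi
        rw [hdiag_nonzero i hi]
        exact (zhat_spec ℓ (hEx i hi)).1
      · intro i hi
        rw [hdiag_nonzero i hi]
        exact (zhat_spec ℓ (hEx i hi)).2
    rw [← hsplit, hZ, hN, mul_one]
    exact hdprod
  · intro i
    by_cases h : t i = 0
    · show (bigDiag ℓ e n u₀ t ε d σ i : ℤ_[ℓ]) • t (σ.symm i) = t i
      have h' : t (σ.symm i) = 0 := by
        rw [bigPerm_symm_zero ℓ ε Φ ρ π h]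
        exact ((sigZ ℓ n u₀ t ε ρ).symm ⟨i, h⟩).2
      rw [h', smul_zero, h]
    · show (bigDiag ℓ e n u₀ t ε d σ i : ℤ_[ℓ]) • t (σ.symm i) = t i
      rw [hdiag_nonzero i h]
      exact (zhat_spec ℓ (hEx i h)).2.symm

lemma Theta_mul (heℓ : e ∣ ℓ - 1)
    (hΦ : ∀ i i' : {i : Fin n // t i ≠ 0}, (Φ i).1 = (Φ i').1 ↔
      ∃ ζ : ℤ_[ℓ]ˣ, ζ ^ e = 1 ∧ t i.1 = (ζ : ℤ_[ℓ]) • t i'.1)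
    (gp gp' : Gerr ℤ_[ℓ]ˣ e r u₀ × ((j : Fin s) → Equiv.Perm (Fin (u j)))) :
    Theta ℓ e r n u₀ t ε Φ (gp * gp') =
      Theta ℓ e r n u₀ t ε Φ gp * Theta ℓ e r n u₀ t ε Φ gp' := by
  set d := ((gp.1 : Wreath ℤ_[ℓ]ˣ u₀)).left with hd
  set ρ := ((gp.1 : Wreath ℤ_[ℓ]ˣ u₀)).right with hρ
  set d' := ((gp'.1 : Wreath ℤ_[ℓ]ˣ u₀)).left with hd'
  set ρ' := ((gp'.1 : Wreath ℤ_[ℓ]ˣ u₀)).right with hρ'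
  set π := gp.2 with hπ
  set π' := gp'.2 with hπ'
  set σ := bigPerm ℓ n u₀ t ε Φ ρ π with hσdef
  set σ' := bigPerm ℓ n u₀ t ε Φ ρ' π' with hσ'def
  have hmulleft : (((gp * gp').1 : Wreath ℤ_[ℓ]ˣ u₀)).left =
      fun k => d k * d' (ρ.symm k) := rfl
  have hmulright : (((gp * gp').1 : Wreath ℤ_[ℓ]ˣ u₀)).right = ρ * ρ' := rfl
  have hπmul : (gp * gp').2 = fun j => π j * π' j := rfl
  have hbig : bigPerm ℓ n u₀ t ε Φ (ρ * ρ') (fun j => π j * π' j) = σ * σ' :=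
    bigPerm_mul ℓ ε Φ ρ ρ' π π'
  refine SemidirectProduct.ext ?_ ?_
  · funext i
    have hR : (Theta ℓ e r n u₀ t ε Φ gp * Theta ℓ e r n u₀ t ε Φ gp').left i =
        bigDiag ℓ e n u₀ t ε d σ i * bigDiag ℓ e n u₀ t ε d' σ' (σ.symm i) := rfl
    have hL : (Theta ℓ e r n u₀ t ε Φ (gp * gp')).left i =
        bigDiag ℓ e n u₀ t ε (fun k => d k * d' (ρ.symm k)) (σ * σ') i := by
      show bigDiag ℓ e n u₀ t ε (((gp * gp').1 : Wreath ℤ_[ℓ]ˣ u₀)).left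
        (bigPerm ℓ n u₀ t ε Φ (((gp * gp').1 : Wreath ℤ_[ℓ]ˣ u₀)).right (gp * gp').2) i = _
      rw [hmulleft, hmulright, hπmul, hbig]
    rw [hL, hR]
    by_cases h : t i = 0
    · rw [bigDiag, dif_pos h, bigDiag, dif_pos h]
      have h' : t (σ.symm i) = 0 := by
        rw [bigPerm_symm_zero ℓ ε Φ ρ π h]
        exact ((sigZ ℓ n u₀ t ε ρ).symm ⟨i, h⟩).2
      rw [bigDiag, dif_pos h']
      congr 2
      have h1 : (⟨σ.symm i, h'⟩ : {i : Fin n // t i = 0}) = (sigZ ℓ n u₀ t ε ρ).symm ⟨i, h⟩ :=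
        Subtype.ext (bigPerm_symm_zero ℓ ε Φ ρ π h)
      rw [h1]
      show ρ.symm (ε ⟨i, h⟩) = ε (ε.symm (ρ.symm (ε ⟨i, h⟩)))
      exact (Equiv.apply_symm_apply ε _).symm
    · have h2 : ¬ t (σ.symm i) = 0 := by
        have := hσ_bigPerm ℓ ε Φ ρ π i
        rw [← hσdef] at this
        exact (this.1 h)
      rw [bigDiag, dif_neg h, bigDiag, dif_neg h, bigDiag, dif_neg h2]
      have hss : (σ * σ').symm i = σ'.symm (σ.symm i) := rfl
      rw [hss]
      have hc : ¬ t (σ'.symm (σ.symm i)) = 0 := by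
        have := hσ_bigPerm ℓ ε Φ ρ' π' (σ.symm i)
        rw [← hσ'def] at this
        exact this.1 h2
      have hab := bigPerm_exists_rel ℓ e ε Φ hΦ ρ π h
      have hbc := bigPerm_exists_rel ℓ e ε Φ hΦ ρ' π' h2
      rw [← hσdef] at hab
      rw [← hσ'def] at hbc
      exact (zhat_comp ℓ heℓ hc hab hbc).symm
  · show bigPerm ℓ n u₀ t ε Φ (((gp * gp').1 : Wreath ℤ_[ℓ]ˣ u₀)).right (gp * gp').2 = σ * σ'
    rw [hmulright, hπmul, hbig]

end Theta2


section Theta3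

lemma sigma_mk_snd_inj {s : ℕ} {u : Fin s → ℕ} (j : Fin s) {k k' : Fin (u j)}
    (h : (⟨j, k⟩ : (j : Fin s) × Fin (u j)) = ⟨j, k'⟩) : k = k' := by
  obtain ⟨-, h2⟩ := Sigma.mk.inj_iff.mp h
  exact eq_of_heq h2

variable (e r n u₀ : ℕ) (t : Fin n → QmodZ ℓ) {s : ℕ} {u : Fin s → ℕ}
  [inst0 : DecidablePred (fun i : Fin n => t i = 0)]
  (ε : {i : Fin n // t i = 0} ≃ Fin u₀)
  (Φ : {i : Fin n // t i ≠ 0} ≃ ((j : Fin s) × Fin (u j)))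

variable {n u₀ t}

lemma Theta_inj : Function.Injective (Theta ℓ e r n u₀ t ε Φ) := by
  intro gp gp' h
  set d := ((gp.1 : Wreath ℤ_[ℓ]ˣ u₀)).left with hdd
  set ρ := ((gp.1 : Wreath ℤ_[ℓ]ˣ u₀)).right with hρρ
  set d' := ((gp'.1 : Wreath ℤ_[ℓ]ˣ u₀)).left with hdd'
  set ρ' := ((gp'.1 : Wreath ℤ_[ℓ]ˣ u₀)).right with hρρ'
  set π := gp.2 with hππ
  set π' := gp'.2 with hππ'
  have hr : bigPerm ℓ n u₀ t ε Φ ρ π = bigPerm ℓ n u₀ t ε Φ ρ' π' :=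
    congrArg SemidirectProduct.right h
  have hl : bigDiag ℓ e n u₀ t ε d (bigPerm ℓ n u₀ t ε Φ ρ π) =
      bigDiag ℓ e n u₀ t ε d' (bigPerm ℓ n u₀ t ε Φ ρ' π') :=
    congrArg SemidirectProduct.left h
  have hsz : ∀ z : {i : Fin n // t i = 0}, sigZ ℓ n u₀ t ε ρ z = sigZ ℓ n u₀ t ε ρ' z := by
    intro z
    have hz : bigPerm ℓ n u₀ t ε Φ ρ π z.1 = bigPerm ℓ n u₀ t ε Φ ρ' π' z.1 := by rw [hr]
    rw [bigPerm_apply_zero ℓ ε Φ ρ π z.2, bigPerm_apply_zero ℓ ε Φ ρ' π' z.2] at hz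
    exact Subtype.coe_injective hz
  have hρeq : ρ = ρ' := by
    apply Equiv.ext
    intro k
    have h2 := congrArg ε (hsz (ε.symm k))
    simp only [sigZ, Equiv.trans_apply, Equiv.apply_symm_apply] at h2
    exact h2
  have hsn : ∀ m : {i : Fin n // t i ≠ 0}, sigN ℓ n t Φ π m = sigN ℓ n t Φ π' m := by
    intro m
    have hm : bigPerm ℓ n u₀ t ε Φ ρ π m.1 = bigPerm ℓ n u₀ t ε Φ ρ' π' m.1 := by rw [hr]
    rw [bigPerm_apply_nonzero ℓ ε Φ ρ π m.2, bigPerm_apply_nonzero ℓ ε Φ ρ' π' m.2] at hm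
    exact Subtype.coe_injective hm
  have hπeq : π = π' := by
    funext j
    apply Equiv.ext
    intro k
    have h1 := congrArg Φ (hsn (Φ.symm ⟨j, k⟩))
    simp only [sigN, Equiv.trans_apply, Equiv.apply_symm_apply] at h1
    exact sigma_mk_snd_inj j h1
  have hdeq : d = d' := by
    funext k
    have h1 := congrFun hl (ε.symm k).1
    rw [bigDiag, bigDiag, dif_pos (ε.symm k).2, dif_pos (ε.symm k).2] at h1
    simpa only [Subtype.coe_eta, Equiv.apply_symm_apply] using h1
  exact Prod.ext (Subtype.ext (SemidirectProduct.ext hdeq hρeq)) hπeq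

lemma Theta_surj (heℓ : e ∣ ℓ - 1)
    (hΦ : ∀ i i' : {i : Fin n // t i ≠ 0}, (Φ i).1 = (Φ i').1 ↔
      ∃ ζ : ℤ_[ℓ]ˣ, ζ ^ e = 1 ∧ t i.1 = (ζ : ℤ_[ℓ]) • t i'.1)
    {x : Wreath ℤ_[ℓ]ˣ n} (hx : x ∈ torusCentralizer ℓ e r n t) :
    ∃ gp, Theta ℓ e r n u₀ t ε Φ gp = x := by
  obtain ⟨⟨hpow, hprodx⟩, hcent⟩ := hx
  have hx' : x ∈ torusCentralizer ℓ e r n t := ⟨⟨hpow, hprodx⟩, hcent⟩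
  have hz : ∀ i, t i = 0 ↔ t (x.right i) = 0 := by
    intro i
    have := tc_zero_iff ℓ e r n t hx' (x.right i)
    rwa [Equiv.symm_apply_apply] at this
  have hnz : ∀ i, t i ≠ 0 ↔ t (x.right i) ≠ 0 := fun i => not_congr (hz i)
  set permZ : Equiv.Perm {i : Fin n // t i = 0} := Equiv.Perm.subtypePerm x.right (fun i => (hz i).symm) with hpermZ
  set permN : Equiv.Perm {i : Fin n // t i ≠ 0} :=
    Equiv.Perm.subtypePerm x.right (fun i => (hnz i).symm) with hpermN
  set ρ : Equiv.Perm (Fin u₀) := (ε.symm.trans permZ).trans ε with hρdef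
  set q : Equiv.Perm ((j : Fin s) × Fin (u j)) := (Φ.symm.trans permN).trans Φ with hqdef
  have hq : ∀ p, (q p).1 = p.1 := by
    intro p
    have hc := hcent (x.right (Φ.symm p).1)
    rw [Equiv.symm_apply_apply] at hc
    have hex : ∃ ζ : ℤ_[ℓ]ˣ, ζ ^ e = 1 ∧
        t (permN (Φ.symm p)).1 = (ζ : ℤ_[ℓ]) • t (Φ.symm p).1 :=
      ⟨x.left (x.right (Φ.symm p).1), hpow _, hc.symm⟩
    have h1 : (Φ (permN (Φ.symm p))).1 = (Φ (Φ.symm p)).1 := (hΦ _ _).2 hex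
    show (Φ (permN (Φ.symm p))).1 = p.1
    rw [h1, Equiv.apply_symm_apply]
  obtain ⟨π, hπ⟩ := sigmaCongrRight_surj q hq
  set d : Fin u₀ → ℤ_[ℓ]ˣ := fun k => x.left (ε.symm k).1 with hddef
  have hdmem : (⟨d, ρ⟩ : Wreath ℤ_[ℓ]ˣ u₀) ∈ Gerr ℤ_[ℓ]ˣ e r u₀ := by
    refine ⟨fun k => hpow _, ?_⟩
    have hσ' : ∀ i : Fin n, t i ≠ 0 ↔ t (x.right.symm i) ≠ 0 := fun i =>
      (not_congr (tc_zero_iff ℓ e r n t hx' i)).symm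
    have hN1 : (∏ m : {i : Fin n // t i ≠ 0}, x.left m.1) = 1 :=
      prod_nonzero_eq_one ℓ heℓ Φ hΦ x.right hσ' x.left (fun i _ => hpow i)
        (fun i _ => (hcent i).symm)
    have hsplit := Fintype.prod_subtype_mul_prod_subtype (fun i : Fin n => t i = 0) x.left
    have hZeq : (∏ k, d k) = ∏ z : {i : Fin n // t i = 0}, x.left z.1 :=
      Equiv.prod_comp ε.symm (fun z => x.left z.1)
    have hall : (∏ z : {i : Fin n // t i = 0}, x.left z.1) = ∏ i, x.left i := by
      rw [← hsplit]
      have : (∏ m : {i : Fin n // ¬ t i = 0}, x.left m.1) = 1 := hN1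
      rw [this, mul_one]
    show (∏ k, d k) ^ (e / r) = 1
    rw [hZeq, hall]
    exact hprodx
  refine ⟨(⟨⟨d, ρ⟩, hdmem⟩, π), ?_⟩
  have hsigZ : sigZ ℓ n u₀ t ε ρ = permZ := by
    apply Equiv.ext
    intro z
    show ε.symm (ε (permZ (ε.symm (ε z)))) = permZ z
    rw [Equiv.symm_apply_apply, Equiv.symm_apply_apply]
  have hsigN : sigN ℓ n t Φ π = permN := by
    apply Equiv.ext
    intro m
    show Φ.symm (Equiv.sigmaCongrRight π (Φ m)) = permN m
    rw [hπ]
    show Φ.symm (Φ (permN (Φ.symm (Φ m)))) = permN m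
    rw [Equiv.symm_apply_apply, Equiv.symm_apply_apply]
  have hright : bigPerm ℓ n u₀ t ε Φ ρ π = x.right := by
    apply Equiv.ext
    intro i
    by_cases h : t i = 0
    · rw [bigPerm_apply_zero ℓ ε Φ ρ π h, hsigZ]
      rfl
    · rw [bigPerm_apply_nonzero ℓ ε Φ ρ π h, hsigN]
      rfl
  refine SemidirectProduct.ext ?_ hright
  funext i
  show bigDiag ℓ e n u₀ t ε d (bigPerm ℓ n u₀ t ε Φ ρ π) i = x.left i
  by_cases h : t i = 0
  · rw [bigDiag, dif_pos h]
    show x.left (ε.symm (ε ⟨i, h⟩)).1 = x.left i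
    rw [Equiv.symm_apply_apply]
  · rw [bigDiag, dif_neg h, hright]
    have hb : t (x.right.symm i) ≠ 0 := by
      intro h0
      exact h ((tc_zero_iff ℓ e r n t hx' i).1 h0)
    exact zhat_eq ℓ heℓ hb (hpow i) (hcent i).symm

end Theta3


/-- Let `W = G(e,r,n)` with `r ∣ e ∣ ℓ - 1` act on the discrete torus
`T̆ = (ℤ_ℓ/ℓ^∞)^n`, and let `t = (λ_1, …, λ_n) ∈ T̆`.  Declare `i ∼ j` iff
`λ_i = ζ λ_j` for some `e`-th root of unity `ζ ∈ ℤ_ℓ`; let `u₀` be the number of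
indices with `λ_i = 0` and `u 1, …, u s` the sizes of the remaining equivalence
classes.  Then `C_W(t) ≅ G(e,r,u₀) × S_{u 1} × ⋯ × S_{u s}`; in particular `C_W(t)`
is generated by the reflections it contains. -/
theorem torusCentralizer_iso (e r n : ℕ) (hre : r ∣ e) (heℓ : e ∣ ℓ - 1)
    (t : Fin n → QmodZ ℓ)
    (u₀ : ℕ) (hu₀ : Nat.card {i : Fin n // t i = 0} = u₀)
    (s : ℕ) (u : Fin s → ℕ)
    (Φ : {i : Fin n // t i ≠ 0} ≃ ((j : Fin s) × Fin (u j)))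
    (hΦ : ∀ i i' : {i : Fin n // t i ≠ 0}, (Φ i).1 = (Φ i').1 ↔
      ∃ ζ : ℤ_[ℓ]ˣ, ζ ^ e = 1 ∧ t i.1 = (ζ : ℤ_[ℓ]) • t i'.1) :
    Nonempty ((torusCentralizer ℓ e r n t) ≃*
        (Gerr ℤ_[ℓ]ˣ e r u₀ × ((j : Fin s) → Equiv.Perm (Fin (u j))))) ∧
      Subgroup.closure
        {c : torusCentralizer ℓ e r n t |
          IsWreathReflection ℓ n (c : Wreath ℤ_[ℓ]ˣ n)} = ⊤ := by
  classical
  letI inst0 : DecidablePred (fun i : Fin n => t i = 0) := Classical.decPred _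
  have hcard : Fintype.card {i : Fin n // t i = 0} = u₀ := by
    rw [← Nat.card_eq_fintype_card]
    exact hu₀
  let ε : {i : Fin n // t i = 0} ≃ Fin u₀ := Fintype.equivFinOfCardEq hcard
  constructor
  · let F : (Gerr ℤ_[ℓ]ˣ e r u₀ × ((j : Fin s) → Equiv.Perm (Fin (u j)))) →*
        Wreath ℤ_[ℓ]ˣ n :=
      MonoidHom.mk' (Theta ℓ e r n u₀ t ε Φ) (Theta_mul ℓ e r ε Φ heℓ hΦ)
    have hinj : Function.Injective F := Theta_inj ℓ e r ε Φ
    have hrange : F.range = torusCentralizer ℓ e r n t := by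
      apply le_antisymm
      · rintro _ ⟨gp, rfl⟩
        exact Theta_mem ℓ e r ε Φ heℓ hΦ gp
      · intro x hx
        obtain ⟨gp, hgp⟩ := Theta_surj ℓ e r ε Φ heℓ hΦ hx
        exact ⟨gp, hgp⟩
    exact ⟨(MulEquiv.subgroupCongr hrange.symm).trans (MonoidHom.ofInjective hinj).symm⟩
  · exact closure_reflSet_eq_top ℓ heℓ
end

section
/- Let F be a saturated fusion system on a finite p-group S and suppose T ≤ S is an abelian subgroup that is weakly F-closed. Then for any subgroups P, Q ≤ T and any morphism φ ∈ Hom_F(P,Q), there exists φ̄ ∈ Aut_F(T) with φ̄|_P = φ. -/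
/-- A fusion system on a `p`-group `S`: for each subgroup `P ≤ S` a collection of
injective homomorphisms `↥P →* S` (the morphisms of the fusion category, with target
the image subgroup), containing all conjugation maps and closed under restriction,
composition, and inverses of isomorphisms. -/
structure FusionSystem (S : Type) [Group S] where
  /-- `φ` is a morphism of the fusion system with source `P`. -/
  IsMor : ∀ (P : Subgroup S), (↥P →* S) → Prop
  inj_of : ∀ {P : Subgroup S} {φ : ↥P →* S}, IsMor P φ → Function.Injective φ
  conj_mem : ∀ (P : Subgroup S) (g : S),
    IsMor P ((MulAut.conj g).toMonoidHom.comp P.subtype)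
  restrict_mem : ∀ {P : Subgroup S} {φ : ↥P →* S} (P' : Subgroup S) (h : P' ≤ P),
    IsMor P φ → IsMor P' (φ.comp (Subgroup.inclusion h))
  comp_mem : ∀ {P Q : Subgroup S} {φ : ↥P →* S} {ψ : ↥Q →* S}
    (h : ∀ x, φ x ∈ Q), IsMor P φ → IsMor Q ψ →
    IsMor P (ψ.comp (φ.codRestrict Q h))
  inv_mem : ∀ {P : Subgroup S} {φ : ↥P →* S} (hφ : IsMor P φ),
    IsMor φ.range
      (P.subtype.comp (MonoidHom.ofInjective (inj_of hφ)).symm.toMonoidHom)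

/-- For an injective homomorphism `φ` defined on `Q` with image `P`, the subgroup
`N_φ = {g ∈ N_S(Q) | φ ∘ c_g ∘ φ⁻¹ ∈ Aut_S(P)}`. -/
def Nphi {S : Type} [Group S] (Q P : Subgroup S) (φ : ↥Q →* S) : Subgroup S where
  carrier := {g | g ∈ Subgroup.normalizer (Q : Set S) ∧ ∃ h ∈ Subgroup.normalizer (P : Set S),
    ∀ x y : ↥Q, (y : S) = g * x * g⁻¹ → φ y = h * φ x * h⁻¹}
  one_mem' := by
    refine ⟨(Subgroup.normalizer (Q : Set S)).one_mem, 1, (Subgroup.normalizer (P : Set S)).one_mem, ?_⟩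
    intro x y hxy
    have h1 : (y : S) = (x : S) := by simpa using hxy
    have h2 : y = x := Subtype.ext h1
    simp [h2]
  mul_mem' := by
    rintro g g' ⟨hg, h, hh, hcomm⟩ ⟨hg', h', hh', hcomm'⟩
    refine ⟨mul_mem hg hg', h * h', mul_mem hh hh', ?_⟩
    intro x y hxy
    have hz : g' * (x : S) * g'⁻¹ ∈ Q := (Subgroup.mem_normalizer_iff.mp hg' x).mp x.2
    have h1 : φ ⟨g' * (x : S) * g'⁻¹, hz⟩ = h' * φ x * h'⁻¹ :=
      hcomm' x ⟨g' * (x : S) * g'⁻¹, hz⟩ rfl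
    have h2 : φ y = h * φ ⟨g' * (x : S) * g'⁻¹, hz⟩ * h⁻¹ := by
      apply hcomm ⟨g' * (x : S) * g'⁻¹, hz⟩ y
      rw [hxy]
      group
    rw [h2, h1]
    group
  inv_mem' := by
    rintro g ⟨hg, h, hh, hcomm⟩
    refine ⟨inv_mem hg, h⁻¹, inv_mem hh, ?_⟩
    intro x y hxy
    have hx : (x : S) = g * (y : S) * g⁻¹ := by rw [hxy]; group
    have := hcomm y x hx
    rw [this]
    group

namespace FusionSystem

variable {S : Type} [Group S] (F : FusionSystem S)

/-- `P` is fully automized: `Aut_S(P)` is a Sylow `p`-subgroup of `Aut_F(P)`, i.e.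
its index in `Aut_F(P)` is prime to `p`. -/
def FullyAutomized (p : ℕ) (P : Subgroup S) : Prop :=
  ¬ p ∣ (Nat.card {φ : ↥P →* S // F.IsMor P φ ∧ φ.range = P} /
    Nat.card {φ : ↥P →* S //
      ∃ g ∈ Subgroup.normalizer (P : Set S), φ = (MulAut.conj g).toMonoidHom.comp P.subtype})

/-- `P` is receptive: every `F`-isomorphism onto `P` extends to `N_φ`. -/
def Receptive (P : Subgroup S) : Prop :=
  ∀ (Q : Subgroup S) (φ : ↥Q →* S), F.IsMor Q φ → φ.range = P →
    ∃ (hQN : Q ≤ Nphi Q P φ) (ψ : ↥(Nphi Q P φ) →* S),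
      F.IsMor (Nphi Q P φ) ψ ∧ ∀ x : ↥Q, ψ (Subgroup.inclusion hQN x) = φ x

/-- `F` is saturated: every subgroup is `F`-isomorphic to one which is fully
automized and receptive. -/
def Saturated (p : ℕ) : Prop :=
  ∀ P : Subgroup S, ∃ (Q : Subgroup S) (φ : ↥P →* S),
    F.IsMor P φ ∧ φ.range = Q ∧ F.FullyAutomized p Q ∧ F.Receptive Q

/-- `T` is weakly `F`-closed: every `F`-conjugate of `T` equals `T`. -/
def WeaklyClosed (T : Subgroup S) : Prop :=
  ∀ φ : ↥T →* S, F.IsMor T φ → φ.range = T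

end FusionSystem

/-- Let `F` be a saturated fusion system on a finite `p`-group `S` and let `T ≤ S`
be abelian and weakly `F`-closed.  Then every `F`-morphism `φ : P → Q` between
subgroups `P, Q ≤ T` extends to an `F`-automorphism of `T`. -/
theorem fusion_extend_to_weakly_closed (p : ℕ) (hp : p.Prime)
    (S : Type) [Group S] [Finite S] (hS : IsPGroup p S)
    (F : FusionSystem S) (hsat : F.Saturated p)
    (T : Subgroup S) (hab : ∀ x y : ↥T, x * y = y * x) (hwc : F.WeaklyClosed T)
    (P Q : Subgroup S) (hP : P ≤ T) (hQ : Q ≤ T)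
    (φ : ↥P →* S) (hφ : F.IsMor P φ) (hφQ : φ.range ≤ Q) :
    ∃ ψ : ↥T →* S, F.IsMor T ψ ∧ ψ.range = T ∧
      ∀ x : ↥P, ψ (Subgroup.inclusion hP x) = φ x := by
  classical
  obtain ⟨R, χ, hχmor, hχR, _hfa, hrec⟩ := hsat P
  have hφinj : Function.Injective φ := F.inj_of hφ
  -- the inverse of φ as a morphism φ.range →* S, landing in P
  have hι₀mor : F.IsMor φ.range
      (P.subtype.comp (MonoidHom.ofInjective hφinj).symm.toMonoidHom) := F.inv_mem hφ
  set ι₀ : ↥φ.range →* S :=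
    P.subtype.comp (MonoidHom.ofInjective hφinj).symm.toMonoidHom with hι₀def
  have hι₀P : ∀ x, ι₀ x ∈ P := fun x => ((MonoidHom.ofInjective hφinj).symm x).2
  set μ : ↥φ.range →* S := χ.comp (ι₀.codRestrict P hι₀P) with hμdef
  have hμmor : F.IsMor φ.range μ := F.comp_mem hι₀P hι₀mor hχmor
  have hcod : ∀ x : ↥P, (ι₀.codRestrict P hι₀P) ((MonoidHom.ofInjective hφinj) x) = x := by
    intro x
    apply Subtype.ext
    show ι₀ _ = (x : S)
    simp [hι₀def, ← MonoidHom.ofInjective_apply hφinj]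
  have hμrange : μ.range = R := by
    rw [← hχR]
    ext s
    constructor
    · rintro ⟨x, rfl⟩; exact ⟨_, rfl⟩
    · rintro ⟨x, rfl⟩
      exact ⟨MonoidHom.ofInjective hφinj x, by simp [hμdef, hcod x]⟩
  obtain ⟨hQN, ψ₁', hψ₁'mor, hψ₁'ext⟩ := hrec φ.range μ hμmor hμrange
  obtain ⟨hPN, ψ₂', hψ₂'mor, hψ₂'ext⟩ := hrec P χ hχmor hχR
  -- T is contained in every N_ν for ν defined on a subgroup of T
  have key : ∀ (U : Subgroup S), U ≤ T → ∀ (V : Subgroup S) (ν : ↥U →* S),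
      T ≤ Nphi U V ν := by
    intro U hU V ν t ht
    have hcomm : ∀ x : S, x ∈ U → t * x * t⁻¹ = x := by
      intro x hx
      have h' : t * x = x * t := congrArg Subtype.val (hab ⟨t, ht⟩ ⟨x, hU hx⟩)
      rw [h']; group
    constructor
    · rw [Subgroup.mem_normalizer_iff]
      intro x
      constructor
      · intro hx; rw [hcomm x hx]; exact hx
      · intro hy
        have h1 := hcomm _ hy
        have h2 : t * x * t⁻¹ = x := mul_left_cancel (mul_right_cancel h1)
        rw [← h2]; exact hy
    · refine ⟨1, (Subgroup.normalizer (V : Set S)).one_mem, ?_⟩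
      intro x y hxy
      have : (y : S) = (x : S) := by rw [hxy, hcomm _ x.2]
      rw [Subtype.ext this]
      group
  have hφT : φ.range ≤ T := le_trans hφQ hQ
  have hT1 : T ≤ Nphi φ.range R μ := key φ.range hφT R μ
  have hT2 : T ≤ Nphi P R χ := key P hP R χ
  set ψ₁ : ↥T →* S := ψ₁'.comp (Subgroup.inclusion hT1) with hψ₁def
  have hψ₁mor : F.IsMor T ψ₁ := F.restrict_mem T hT1 hψ₁'mor
  have hψ₁rng : ψ₁.range = T := hwc ψ₁ hψ₁mor
  set ψ₂ : ↥T →* S := ψ₂'.comp (Subgroup.inclusion hT2) with hψ₂def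
  have hψ₂mor : F.IsMor T ψ₂ := F.restrict_mem T hT2 hψ₂'mor
  have hψ₂rng : ψ₂.range = T := hwc ψ₂ hψ₂mor
  have hψ₁inj : Function.Injective ψ₁ := F.inj_of hψ₁mor
  set e : ↥T ≃* ↥ψ₁.range := MonoidHom.ofInjective hψ₁inj with hedef
  have hιmor : F.IsMor ψ₁.range
      (T.subtype.comp (MonoidHom.ofInjective (F.inj_of hψ₁mor)).symm.toMonoidHom) :=
    F.inv_mem hψ₁mor
  have hmem : ∀ x, ψ₂ x ∈ ψ₁.range := by
    intro x
    exact (SetLike.ext_iff.mp hψ₁rng _).mpr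
      ((SetLike.ext_iff.mp hψ₂rng _).mp ⟨x, rfl⟩)
  set ψ : ↥T →* S :=
    (T.subtype.comp (MonoidHom.ofInjective (F.inj_of hψ₁mor)).symm.toMonoidHom).comp
      (ψ₂.codRestrict ψ₁.range hmem) with hψdef
  have hψmor : F.IsMor T ψ := F.comp_mem hmem hψ₂mor hιmor
  have hψapp : ∀ t : ↥T, ψ t = ((e.symm ⟨ψ₂ t, hmem t⟩ : ↥T) : S) := fun t => rfl
  have hψrng : ψ.range = T := by
    apply le_antisymm
    · rintro s ⟨t, rfl⟩
      rw [hψapp]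
      exact (e.symm ⟨ψ₂ t, hmem t⟩).2
    · intro s hs
      have hz : ((e ⟨s, hs⟩ : ↥ψ₁.range) : S) ∈ ψ₂.range :=
        (SetLike.ext_iff.mp hψ₂rng _).mpr
          ((SetLike.ext_iff.mp hψ₁rng _).mp (e ⟨s, hs⟩).2)
      obtain ⟨y, hy⟩ := hz
      refine ⟨y, ?_⟩
      rw [hψapp]
      have : (⟨ψ₂ y, hmem y⟩ : ↥ψ₁.range) = e ⟨s, hs⟩ := Subtype.ext hy
      rw [this, MulEquiv.symm_apply_apply]
  refine ⟨ψ, hψmor, hψrng, ?_⟩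
  intro x
  -- Step A : ψ₂ (inclusion hP x) = χ x
  have hA : ψ₂ (Subgroup.inclusion hP x) = χ x := by
    have h1 : Subgroup.inclusion hT2 (Subgroup.inclusion hP x)
        = Subgroup.inclusion hPN x := Subtype.ext rfl
    rw [hψ₂def]
    show ψ₂' (Subgroup.inclusion hT2 (Subgroup.inclusion hP x)) = χ x
    rw [h1, hψ₂'ext x]
  -- Step B : ψ₁ t₀ = χ x  where t₀ = φ x viewed in T
  set t₀ : ↥T := ⟨φ x, hφT ⟨x, rfl⟩⟩ with ht₀def
  set w : ↥φ.range := ⟨φ x, ⟨x, rfl⟩⟩ with hwdef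
  have hB : ψ₁ t₀ = χ x := by
    have h1 : Subgroup.inclusion hT1 t₀ = Subgroup.inclusion hQN w := Subtype.ext rfl
    have h2 : ψ₁ t₀ = μ w := by
      rw [hψ₁def]
      show ψ₁' (Subgroup.inclusion hT1 t₀) = μ w
      rw [h1, hψ₁'ext w]
    rw [h2, hμdef]
    show χ ((ι₀.codRestrict P hι₀P) w) = χ x
    have hw : w = MonoidHom.ofInjective hφinj x := Subtype.ext (MonoidHom.ofInjective_apply hφinj).symm
    rw [hw, hcod x]
  -- conclusion
  rw [hψapp]
  have hEt : e t₀ = ⟨ψ₂ (Subgroup.inclusion hP x), hmem _⟩ := by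
    apply Subtype.ext
    show ψ₁ t₀ = ψ₂ (Subgroup.inclusion hP x)
    rw [hA, hB]
  rw [← hEt, MulEquiv.symm_apply_apply]
end
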